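/- arXiv:1402.2324 — 2 statements merged into one kernel-verified Lean document; each statement's English description precedes it below -/
import Mathlib

section
/- Let n, d, r be positive integers and C > 0. Let M = UΣVᵀ be a rank-r matrix in ℝ^{n×n} satisfying assumptions A1 and A2 (with parameter δ_d), and let Ω be generated by a d-regular bipartite graph whose biadjacency matrix G satisfies G1 and G2 with constant C. Then for every matrix Z in the subspace T, ‖(n/d)·P_T(P_Ω(Z)) − Z‖_F ≤ √(2·(δ_d² + C²μ₀²r²/d))·‖Z‖_F. -/
open Matrix
open scoped BigOperators

noncomputable section

/-- Euclidean norm of a vector. -/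
def vecNorm {β : Type*} [Fintype β] (x : β → ℝ) : ℝ :=
  Real.sqrt (∑ i, x i ^ 2)

/-- Spectral norm (largest singular value) of a real matrix. -/
def specNorm {α β : Type*} [Fintype α] [Fintype β] (A : Matrix α β ℝ) : ℝ :=
  sSup {c | ∃ x : β → ℝ, vecNorm x ≤ 1 ∧ c = vecNorm (A.mulVec x)}

/-- Second largest singular value of a real matrix (Courant–Fischer characterization). -/
def sigma2 {α β : Type*} [Fintype α] [Fintype β] (A : Matrix α β ℝ) : ℝ :=
  ⨅ v : β → ℝ, sSup {c | ∃ x : β → ℝ,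
    vecNorm x ≤ 1 ∧ (∑ i, v i * x i) = 0 ∧ c = vecNorm (A.mulVec x)}

/-- Frobenius norm. -/
def frobNorm {α β : Type*} [Fintype α] [Fintype β] (A : Matrix α β ℝ) : ℝ :=
  Real.sqrt (∑ i, ∑ j, A i j ^ 2)

/-- Nuclear norm: the sum of the singular values, i.e. the trace of `√(AᵀA)`. -/
def nuclearNorm {α β : Type*} [Fintype α] [Fintype β] [DecidableEq β]
    (A : Matrix α β ℝ) : ℝ :=
  (((Matrix.posSemidef_conjTranspose_mul_self A).1.eigenvectorUnitary : Matrix β β ℝ) *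
    Matrix.diagonal ((RCLike.ofReal : ℝ → ℝ) ∘ (Real.sqrt ·) ∘
      (Matrix.posSemidef_conjTranspose_mul_self A).1.eigenvalues) *
    (star (Matrix.posSemidef_conjTranspose_mul_self A).1.eigenvectorUnitary :
      Matrix β β ℝ)).trace

/-- The sampling operator `P_Ω`. -/
def sampl {n : ℕ} (Ω : Finset (Fin n × Fin n)) (M : Matrix (Fin n) (Fin n) ℝ) :
    Matrix (Fin n) (Fin n) ℝ :=
  Matrix.of fun i j => if (i, j) ∈ Ω then M i j else 0

/-- The biadjacency matrix `G` of the bipartite graph with edge set `Ω`. -/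
def biadj {n : ℕ} (Ω : Finset (Fin n × Fin n)) : Matrix (Fin n) (Fin n) ℝ :=
  Matrix.of fun i j => if (i, j) ∈ Ω then (1 : ℝ) else 0

/-- `Ω` is the edge set of a `d`-regular bipartite graph: every row and every column
of `G` has exactly `d` ones. -/
def RegularSampling {n : ℕ} (Ω : Finset (Fin n × Fin n)) (d : ℕ) : Prop :=
  (∀ i : Fin n, (Finset.univ.filter fun j => (i, j) ∈ Ω).card = d) ∧
  (∀ j : Fin n, (Finset.univ.filter fun i => (i, j) ∈ Ω).card = d)

/-- Assumption G1: the all-ones vector is a top left- and right-singular vector of `G`,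
with `σ₁(G) = d`. -/
def AssumptionG1 {n : ℕ} (Ω : Finset (Fin n × Fin n)) (d : ℕ) : Prop :=
  specNorm (biadj Ω) = d ∧
  (biadj Ω).mulVec (fun _ => 1) = (fun _ => (d : ℝ)) ∧
  Matrix.vecMul (fun _ => 1) (biadj Ω) = (fun _ => (d : ℝ))

/-- Assumption G2: `σ₂(G) ≤ C·√d`. -/
def AssumptionG2 {n : ℕ} (Ω : Finset (Fin n × Fin n)) (d : ℕ) (C : ℝ) : Prop :=
  sigma2 (biadj Ω) ≤ C * Real.sqrt d

/-- Assumption A1 (`μ₀`-incoherence) for one factor: every row `U^i` satisfies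
`‖U^i‖² ≤ μ₀ r / n`. -/
def IncoherentRows {n r : ℕ} (U : Matrix (Fin n) (Fin r) ℝ) (μ₀ : ℝ) : Prop :=
  ∀ i : Fin n, (∑ k, U i k ^ 2) ≤ μ₀ * r / n

/-- Assumption A2 (strong incoherence with parameter `δ`) for one factor:
for every `S` with `|S| = d`, `‖(n/d)·∑_{k∈S} U^k (U^k)ᵀ − I‖ ≤ δ`. -/
def StrongIncoherence {n r : ℕ} (U : Matrix (Fin n) (Fin r) ℝ) (d : ℕ) (δ : ℝ) : Prop :=
  ∀ S : Finset (Fin n), S.card = d →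
    specNorm (((n : ℝ) / (d : ℝ)) • (∑ k ∈ S, Matrix.vecMulVec (U k) (U k)) - 1) ≤ δ

/-- `M = U · diagonal s · Vᵀ` is a thin SVD of the rank-`r` matrix `M`. -/
def IsThinSVD {n r : ℕ} (M : Matrix (Fin n) (Fin n) ℝ)
    (U : Matrix (Fin n) (Fin r) ℝ) (s : Fin r → ℝ) (V : Matrix (Fin n) (Fin r) ℝ) : Prop :=
  Uᵀ * U = 1 ∧ Vᵀ * V = 1 ∧ (∀ i, 0 < s i) ∧ M = U * Matrix.diagonal s * Vᵀ

/-- The projection `P_T` onto the subspace `T` spanned by matrices `UXᵀ` and `YVᵀ`. -/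
def projT {n r : ℕ} (U V : Matrix (Fin n) (Fin r) ℝ) (Z : Matrix (Fin n) (Fin n) ℝ) :
    Matrix (Fin n) (Fin n) ℝ :=
  U * Uᵀ * Z + Z * (V * Vᵀ) - U * Uᵀ * Z * (V * Vᵀ)

/-- The projection `P_{T⊥}` onto the orthogonal complement of `T`. -/
def projTperp {n r : ℕ} (U V : Matrix (Fin n) (Fin r) ℝ) (Z : Matrix (Fin n) (Fin n) ℝ) :
    Matrix (Fin n) (Fin n) ℝ :=
  (1 - U * Uᵀ) * Z * (1 - V * Vᵀ)

end

namespace Stmt7Aux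
open Finset Matrix

lemma N2_nonneg {β : Type*} [Fintype β] (x : β → ℝ) : 0 ≤ ∑ i, x i ^ 2 :=
  Finset.sum_nonneg fun i _ => sq_nonneg _

lemma vecNorm_nonneg {β : Type*} [Fintype β] (x : β → ℝ) : 0 ≤ vecNorm x :=
  Real.sqrt_nonneg _

lemma vecNorm_sq {β : Type*} [Fintype β] (x : β → ℝ) : vecNorm x ^ 2 = ∑ i, x i ^ 2 :=
  Real.sq_sqrt (N2_nonneg x)

lemma vecNorm_eq_zero {β : Type*} [Fintype β] {x : β → ℝ} (h : vecNorm x = 0) : x = 0 := by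
  have h2 : ∑ i, x i ^ 2 = 0 := by
    have := vecNorm_sq x; rw [h] at this; linarith [this]
  funext i
  have := (Finset.sum_eq_zero_iff_of_nonneg (fun i _ => sq_nonneg (x i))).1 h2 i (mem_univ i)
  exact pow_eq_zero_iff (n := 2) (by norm_num) |>.1 this

lemma vecNorm_smul {β : Type*} [Fintype β] (c : ℝ) (x : β → ℝ) :
    vecNorm (c • x) = |c| * vecNorm x := by
  unfold vecNorm
  have : ∑ i, (c • x) i ^ 2 = c ^ 2 * ∑ i, x i ^ 2 := by
    rw [Finset.mul_sum]; exact Finset.sum_congr rfl fun i _ => by simp [mul_pow]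
  rw [this, Real.sqrt_mul (sq_nonneg c), Real.sqrt_sq_eq_abs]

lemma sum_mul_le (β : Type*) [Fintype β] (x y : β → ℝ) :
    ∑ i, x i * y i ≤ vecNorm x * vecNorm y := by
  have h := Finset.sum_mul_sq_le_sq_mul_sq univ x y
  have : |∑ i, x i * y i| ≤ vecNorm x * vecNorm y := by
    rw [← Real.sqrt_sq_eq_abs]
    unfold vecNorm
    rw [← Real.sqrt_mul (N2_nonneg x)]
    exact Real.sqrt_le_sqrt h
  exact le_trans (le_abs_self _) this

lemma abs_sum_mul_le (β : Type*) [Fintype β] (x y : β → ℝ) :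
    |∑ i, x i * y i| ≤ vecNorm x * vecNorm y := by
  rcases abs_le.mp (le_refl |∑ i, x i * y i|) with ⟨h1, h2⟩
  rcases abs_cases (∑ i, x i * y i) with ⟨he, _⟩ | ⟨he, _⟩
  · rw [he]; exact sum_mul_le β x y
  · rw [he]
    have := sum_mul_le β (-x) y
    simpa [vecNorm, neg_mul] using this

lemma vecNorm_add_le {β : Type*} [Fintype β] (x y : β → ℝ) :
    vecNorm (x + y) ≤ vecNorm x + vecNorm y := by
  have hsq : vecNorm (x + y) ^ 2 ≤ (vecNorm x + vecNorm y) ^ 2 := by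
    rw [vecNorm_sq]
    have hexp : ∑ i, (x + y) i ^ 2 = (∑ i, x i ^ 2) + 2 * (∑ i, x i * y i) + ∑ i, y i ^ 2 := by
      rw [Finset.mul_sum, ← Finset.sum_add_distrib, ← Finset.sum_add_distrib]
      exact Finset.sum_congr rfl fun i _ => by simp [Pi.add_apply]; ring
    rw [hexp, add_sq]
    have := sum_mul_le β x y
    have hx := vecNorm_sq x
    have hy := vecNorm_sq y
    nlinarith
  nlinarith [vecNorm_nonneg (x + y), vecNorm_nonneg x, vecNorm_nonneg y]

end Stmt7Aux
namespace Stmt7Aux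
open Finset Matrix

lemma F2_nonneg {α β : Type*} [Fintype α] [Fintype β] (A : Matrix α β ℝ) :
    0 ≤ ∑ i, ∑ j, A i j ^ 2 :=
  Finset.sum_nonneg fun i _ => N2_nonneg _

lemma frobNorm_nonneg {α β : Type*} [Fintype α] [Fintype β] (A : Matrix α β ℝ) :
    0 ≤ frobNorm A := Real.sqrt_nonneg _

lemma frobNorm_sq {α β : Type*} [Fintype α] [Fintype β] (A : Matrix α β ℝ) :
    frobNorm A ^ 2 = ∑ i, ∑ j, A i j ^ 2 := Real.sq_sqrt (F2_nonneg A)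

lemma frobNorm_eq_vecNorm {α β : Type*} [Fintype α] [Fintype β] (A : Matrix α β ℝ) :
    frobNorm A = vecNorm (fun p : α × β => A p.1 p.2) := by
  unfold frobNorm vecNorm
  rw [Fintype.sum_prod_type]

lemma frobNorm_transpose {α β : Type*} [Fintype α] [Fintype β] (A : Matrix α β ℝ) :
    frobNorm Aᵀ = frobNorm A := by
  unfold frobNorm
  rw [Finset.sum_comm]
  rfl

lemma frobNorm_add_le {α β : Type*} [Fintype α] [Fintype β] (A B : Matrix α β ℝ) :
    frobNorm (A + B) ≤ frobNorm A + frobNorm B := by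
  rw [frobNorm_eq_vecNorm, frobNorm_eq_vecNorm A, frobNorm_eq_vecNorm B]
  exact vecNorm_add_le _ _

lemma frobNorm_smul {α β : Type*} [Fintype α] [Fintype β] (c : ℝ) (A : Matrix α β ℝ) :
    frobNorm (c • A) = |c| * frobNorm A := by
  rw [frobNorm_eq_vecNorm, frobNorm_eq_vecNorm A]
  exact vecNorm_smul c _

lemma F2_eq_trace {α β : Type*} [Fintype α] [Fintype β] (A : Matrix α β ℝ) :
    ∑ i, ∑ j, A i j ^ 2 = (Aᵀ * A).trace := by
  unfold Matrix.trace
  rw [Finset.sum_comm]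
  refine Finset.sum_congr rfl fun j _ => ?_
  simp [Matrix.diag, Matrix.mul_apply, Matrix.transpose_apply, sq]

lemma trace_tsub {α β : Type*} [Fintype α] [Fintype β] (X Y : Matrix α β ℝ) :
    (Xᵀ * Y).trace = (Yᵀ * X).trace := by
  rw [← Matrix.trace_transpose (Xᵀ * Y), Matrix.transpose_mul, Matrix.transpose_transpose]

lemma F2_add {α β : Type*} [Fintype α] [Fintype β] (X Y : Matrix α β ℝ) :
    ∑ i, ∑ j, (X + Y) i j ^ 2
      = (∑ i, ∑ j, X i j ^ 2) + (∑ i, ∑ j, Y i j ^ 2) + 2 * (Xᵀ * Y).trace := by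
  have ht : (Xᵀ * Y).trace = ∑ i, ∑ j, X i j * Y i j := by
    unfold Matrix.trace
    rw [Finset.sum_comm]
    refine Finset.sum_congr rfl fun j _ => ?_
    simp [Matrix.diag, Matrix.mul_apply, Matrix.transpose_apply]
  rw [ht, Finset.mul_sum, ← Finset.sum_add_distrib, ← Finset.sum_add_distrib]
  refine Finset.sum_congr rfl fun i _ => ?_
  rw [Finset.mul_sum, ← Finset.sum_add_distrib, ← Finset.sum_add_distrib]
  refine Finset.sum_congr rfl fun j _ => ?_
  simp [Matrix.add_apply]; ring

lemma F2_mul_left {α β γ : Type*} [Fintype α] [Fintype β] [Fintype γ] [DecidableEq β]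
    (U : Matrix α β ℝ) (hU : Uᵀ * U = 1) (X : Matrix β γ ℝ) :
    ∑ i, ∑ j, (U * X) i j ^ 2 = ∑ i, ∑ j, X i j ^ 2 := by
  rw [F2_eq_trace, F2_eq_trace, Matrix.transpose_mul, Matrix.mul_assoc,
    ← Matrix.mul_assoc Uᵀ U X, hU, Matrix.one_mul]

lemma F2_mul_right {α β γ : Type*} [Fintype α] [Fintype β] [Fintype γ] [DecidableEq β]
    (V : Matrix α β ℝ) (hV : Vᵀ * V = 1) (X : Matrix γ β ℝ) :
    ∑ i, ∑ j, (X * Vᵀ) i j ^ 2 = ∑ i, ∑ j, X i j ^ 2 := by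
  rw [F2_eq_trace, F2_eq_trace, Matrix.transpose_mul, Matrix.transpose_transpose,
    Matrix.mul_assoc, Matrix.trace_mul_comm, Matrix.mul_assoc, Matrix.mul_assoc, hV,
    Matrix.mul_one]

end Stmt7Aux
namespace Stmt7Aux
open Finset Matrix

lemma mulVec_vecNorm_le_frob {α β : Type*} [Fintype α] [Fintype β]
    (A : Matrix α β ℝ) (x : β → ℝ) :
    vecNorm (A.mulVec x) ≤ frobNorm A * vecNorm x := by
  have hsq : vecNorm (A.mulVec x) ^ 2 ≤ (frobNorm A * vecNorm x) ^ 2 := by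
    rw [vecNorm_sq, mul_pow, frobNorm_sq, vecNorm_sq]
    rw [Finset.sum_mul]
    refine Finset.sum_le_sum fun i _ => ?_
    exact Finset.sum_mul_sq_le_sq_mul_sq univ (fun j => A i j) x
  nlinarith [vecNorm_nonneg (A.mulVec x), frobNorm_nonneg A, vecNorm_nonneg x,
    mul_nonneg (frobNorm_nonneg A) (vecNorm_nonneg x)]

lemma specSet_bddAbove {α β : Type*} [Fintype α] [Fintype β] (A : Matrix α β ℝ) :
    BddAbove {c | ∃ x : β → ℝ, vecNorm x ≤ 1 ∧ c = vecNorm (A.mulVec x)} := by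
  refine ⟨frobNorm A, fun c hc => ?_⟩
  obtain ⟨x, hx, rfl⟩ := hc
  calc vecNorm (A.mulVec x) ≤ frobNorm A * vecNorm x := mulVec_vecNorm_le_frob A x
    _ ≤ frobNorm A * 1 := by
        exact mul_le_mul_of_nonneg_left hx (frobNorm_nonneg A)
    _ = frobNorm A := mul_one _

lemma vecNorm_zero {β : Type*} [Fintype β] : vecNorm (0 : β → ℝ) = 0 := by
  simp [vecNorm]

lemma specNorm_nonneg {α β : Type*} [Fintype α] [Fintype β] (A : Matrix α β ℝ) :
    0 ≤ specNorm A := by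
  have hmem : (0 : ℝ) ∈ {c | ∃ x : β → ℝ, vecNorm x ≤ 1 ∧ c = vecNorm (A.mulVec x)} := by
    exact ⟨0, by rw [vecNorm_zero]; norm_num, by rw [Matrix.mulVec_zero, vecNorm_zero]⟩
  exact le_csSup (specSet_bddAbove A) hmem

lemma vecNorm_mulVec_le {α β : Type*} [Fintype α] [Fintype β]
    (A : Matrix α β ℝ) (x : β → ℝ) :
    vecNorm (A.mulVec x) ≤ specNorm A * vecNorm x := by
  by_cases hx : vecNorm x = 0
  · simp [vecNorm_eq_zero hx, Matrix.mulVec_zero, vecNorm_zero]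
  · have hpos : 0 < vecNorm x := lt_of_le_of_ne (vecNorm_nonneg x) (Ne.symm hx)
    set t := vecNorm x
    have hx1 : vecNorm (t⁻¹ • x) = 1 := by
      rw [vecNorm_smul, abs_of_pos (inv_pos.mpr hpos)]
      field_simp
      rfl
    have hmem : vecNorm (A.mulVec (t⁻¹ • x)) ∈
        {c | ∃ y : β → ℝ, vecNorm y ≤ 1 ∧ c = vecNorm (A.mulVec y)} :=
      ⟨t⁻¹ • x, le_of_eq hx1, rfl⟩
    have hle := le_csSup (specSet_bddAbove A) hmem
    have heq : vecNorm (A.mulVec (t⁻¹ • x)) = t⁻¹ * vecNorm (A.mulVec x) := by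
      rw [Matrix.mulVec_smul, vecNorm_smul, abs_of_pos (inv_pos.mpr hpos)]
    rw [heq] at hle
    have := mul_le_mul_of_nonneg_right hle (le_of_lt hpos)
    calc vecNorm (A.mulVec x) = t⁻¹ * vecNorm (A.mulVec x) * t := by field_simp
      _ ≤ specNorm A * t := this

end Stmt7Aux
namespace Stmt7Aux
open Finset Matrix

lemma sigSet_bddAbove {α β : Type*} [Fintype α] [Fintype β] (A : Matrix α β ℝ) (v : β → ℝ) :
    BddAbove {c | ∃ x : β → ℝ, vecNorm x ≤ 1 ∧ (∑ i, v i * x i) = 0 ∧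
      c = vecNorm (A.mulVec x)} := by
  refine ⟨frobNorm A, fun c hc => ?_⟩
  obtain ⟨x, hx, _, rfl⟩ := hc
  calc vecNorm (A.mulVec x) ≤ frobNorm A * vecNorm x := mulVec_vecNorm_le_frob A x
    _ ≤ frobNorm A * 1 := mul_le_mul_of_nonneg_left hx (frobNorm_nonneg A)
    _ = frobNorm A := mul_one _

lemma gap_mulVec {n d : ℕ} (hn : 0 < n) {C : ℝ}
    (Ω : Finset (Fin n × Fin n)) (hG1 : AssumptionG1 Ω d) (hG2 : AssumptionG2 Ω d C)
    (x : Fin n → ℝ) (hx : ∑ i, x i = 0) :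
    vecNorm ((biadj Ω).mulVec x) ≤ (C * Real.sqrt d) * vecNorm x := by
  obtain ⟨hspec, hright, hleft⟩ := hG1
  set G := biadj Ω with hGdef
  by_cases hx0 : vecNorm x = 0
  · simp [vecNorm_eq_zero hx0, Matrix.mulVec_zero, vecNorm_zero, hx0]
  have hpos : 0 < vecNorm x := lt_of_le_of_ne (vecNorm_nonneg x) (Ne.symm hx0)
  set u : Fin n → ℝ := (vecNorm x)⁻¹ • x with hu_def
  have hu1 : vecNorm u = 1 := by
    rw [hu_def, vecNorm_smul, abs_of_pos (inv_pos.mpr hpos)]; field_simp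
  have husum : ∑ i, u i = 0 := by
    rw [hu_def]
    simp only [Pi.smul_apply, smul_eq_mul, ← Finset.mul_sum, hx, mul_zero]
  have hu2 : ∑ i, u i ^ 2 = 1 := by
    have := vecNorm_sq u; rw [hu1] at this; linarith
  -- spectral norm bound for the unit vector u
  have hGu_le : vecNorm (G.mulVec u) ≤ (d : ℝ) := by
    have := vecNorm_mulVec_le G u
    rw [hu1, mul_one, hspec] at this
    exact this
  -- column sums of G are all d (from the left singular condition)
  have hcolsum : ∀ j, ∑ i, G i j = (d : ℝ) := by
    intro j
    have := congrFun hleft j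
    simpa [Matrix.vecMul, dotProduct] using this
  -- sum of entries of G *ᵥ y equals d * ∑ y
  have hGsum : ∀ y : Fin n → ℝ, ∑ i, (G.mulVec y) i = (d : ℝ) * ∑ j, y j := by
    intro y
    unfold Matrix.mulVec dotProduct
    rw [Finset.sum_comm]
    rw [Finset.mul_sum]
    refine Finset.sum_congr rfl fun j _ => ?_
    rw [← Finset.sum_mul, hcolsum j]
  -- main claim: ‖G u‖ ≤ sigma2 G
  have hmain : vecNorm (G.mulVec u) ≤ sigma2 G := by
    refine le_ciInf fun v => ?_
    set e : Fin n → ℝ := fun _ => (Real.sqrt n)⁻¹ with he_def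
    have hnpos : (0:ℝ) < n := by exact_mod_cast hn
    have hsn : Real.sqrt n > 0 := Real.sqrt_pos.mpr hnpos
    have he2 : ∑ i, e i ^ 2 = 1 := by
      rw [he_def]
      simp only [Finset.sum_const, Finset.card_univ, Fintype.card_fin, nsmul_eq_mul]
      rw [inv_pow, Real.sq_sqrt (le_of_lt hnpos)]
      field_simp
    have heu : ∑ i, e i * u i = 0 := by
      rw [he_def]
      simp only [← Finset.mul_sum, husum, mul_zero]
    have hGe : G.mulVec e = fun _ => (d : ℝ) * (Real.sqrt n)⁻¹ := by
      have : e = (Real.sqrt n)⁻¹ • (fun _ => (1:ℝ)) := by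
        funext i; simp [he_def]
      rw [this, Matrix.mulVec_smul, hright]
      funext i; simp [mul_comm]
    set p := ∑ i, v i * e i with hp_def
    set q := ∑ i, v i * u i with hq_def
    set t := Real.sqrt (p^2 + q^2) with ht_def
    by_cases ht : t = 0
    · -- then p = q = 0, and u itself is admissible
      have hpq : p^2 + q^2 ≤ 0 := (Real.sqrt_eq_zero').mp ht
      have hq0 : q = 0 := by nlinarith [sq_nonneg p, sq_nonneg q]
      refine le_csSup (sigSet_bddAbove G v) ?_
      exact ⟨u, le_of_eq hu1, by rw [← hq_def]; exact hq0, rfl⟩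
    · have htpos : 0 < t := lt_of_le_of_ne (Real.sqrt_nonneg _) (Ne.symm ht)
      have ht2 : t^2 = p^2 + q^2 := Real.sq_sqrt (by positivity)
      set α := q / t with hα_def
      set β := -p / t with hβ_def
      have hαβ : α^2 + β^2 = 1 := by
        rw [hα_def, hβ_def]
        field_simp
        linarith [ht2]
      set z : Fin n → ℝ := α • e + β • u with hz_def
      have hz_orth : ∑ i, v i * z i = 0 := by
        rw [hz_def]
        have : ∀ i, v i * (α • e + β • u) i = α * (v i * e i) + β * (v i * u i) := by
          intro i; simp [Pi.add_apply]; ring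
        rw [Finset.sum_congr rfl fun i _ => this i, Finset.sum_add_distrib,
          ← Finset.mul_sum, ← Finset.mul_sum, ← hp_def, ← hq_def, hα_def, hβ_def]
        field_simp
        ring
      have hz2 : ∑ i, z i ^ 2 = 1 := by
        have : ∀ i, z i ^ 2 = α^2 * e i ^2 + β^2 * u i ^2 + (2*α*β) * (e i * u i) := by
          intro i; rw [hz_def]; simp [Pi.add_apply]; ring
        rw [Finset.sum_congr rfl fun i _ => this i]
        rw [Finset.sum_add_distrib, Finset.sum_add_distrib,
          ← Finset.mul_sum, ← Finset.mul_sum, ← Finset.mul_sum, he2, hu2, heu]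
        rw [mul_zero, add_zero, mul_one, mul_one, hαβ]
      have hznorm : vecNorm z = 1 := by
        unfold vecNorm; rw [hz2, Real.sqrt_one]
      have hGz : G.mulVec z = α • (G.mulVec e) + β • (G.mulVec u) := by
        rw [hz_def, Matrix.mulVec_add, Matrix.mulVec_smul, Matrix.mulVec_smul]
      have hGusum : ∑ i, (G.mulVec u) i = 0 := by rw [hGsum u, husum, mul_zero]
      have hGe2 : ∑ i, (G.mulVec e) i ^ 2 = (d:ℝ)^2 := by
        rw [hGe]
        simp only [Finset.sum_const, Finset.card_univ, Fintype.card_fin, nsmul_eq_mul]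
        rw [mul_pow, inv_pow, Real.sq_sqrt (le_of_lt hnpos)]
        field_simp
      have hcross : ∑ i, (G.mulVec e) i * (G.mulVec u) i = 0 := by
        rw [hGe]
        rw [← Finset.mul_sum, hGusum, mul_zero]
      have hGz2 : ∑ i, (G.mulVec z) i ^ 2
          = α^2 * (d:ℝ)^2 + β^2 * ∑ i, (G.mulVec u) i ^ 2 := by
        rw [hGz]
        have : ∀ i, (α • G.mulVec e + β • G.mulVec u) i ^ 2
            = α^2 * (G.mulVec e) i ^2 + β^2 * (G.mulVec u) i ^2
              + (2*α*β) * ((G.mulVec e) i * (G.mulVec u) i) := by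
          intro i; simp [Pi.add_apply]; ring
        rw [Finset.sum_congr rfl fun i _ => this i]
        rw [Finset.sum_add_distrib, Finset.sum_add_distrib,
          ← Finset.mul_sum, ← Finset.mul_sum, ← Finset.mul_sum, hGe2, hcross]
        ring
      have hGu2_le : ∑ i, (G.mulVec u) i ^ 2 ≤ (d:ℝ)^2 := by
        have h2 : vecNorm (G.mulVec u)^2 ≤ (d:ℝ)^2 :=
          pow_le_pow_left₀ (vecNorm_nonneg _) hGu_le 2
        rwa [vecNorm_sq] at h2
      have hle2 : ∑ i, (G.mulVec u) i ^ 2 ≤ ∑ i, (G.mulVec z) i ^ 2 := by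
        rw [hGz2]
        set a := ∑ i, (G.mulVec u) i ^ 2 with ha_def
        have hm : α^2 * a ≤ α^2 * (d:ℝ)^2 :=
          mul_le_mul_of_nonneg_left hGu2_le (sq_nonneg α)
        calc a = α^2 * a + β^2 * a := by rw [← add_mul, hαβ, one_mul]
          _ ≤ α^2 * (d:ℝ)^2 + β^2 * a := by linarith
          _ = α ^ 2 * ↑d ^ 2 + β ^ 2 * a := by ring
      have hfin : vecNorm (G.mulVec u) ≤ vecNorm (G.mulVec z) := by
        unfold vecNorm; exact Real.sqrt_le_sqrt hle2
      refine le_trans hfin (le_csSup (sigSet_bddAbove G v) ?_)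
      exact ⟨z, le_of_eq hznorm, hz_orth, rfl⟩
  have hfinal : vecNorm (G.mulVec u) ≤ C * Real.sqrt d := le_trans hmain hG2
  have hxu : x = (vecNorm x) • u := by
    rw [hu_def, smul_smul]
    field_simp
    simp
  calc vecNorm (G.mulVec x) = vecNorm x * vecNorm (G.mulVec u) := by
        rw [hxu, Matrix.mulVec_smul, vecNorm_smul, abs_of_pos hpos]
        rw [← hxu]
    _ ≤ vecNorm x * (C * Real.sqrt d) := mul_le_mul_of_nonneg_left hfinal (le_of_lt hpos)
    _ = (C * Real.sqrt d) * vecNorm x := mul_comm _ _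

end Stmt7Aux
namespace Stmt7Aux
open Finset Matrix

lemma gap_vecMul {n d : ℕ} (hn : 0 < n) {C : ℝ} (hC : 0 ≤ C)
    (Ω : Finset (Fin n × Fin n)) (hG1 : AssumptionG1 Ω d) (hG2 : AssumptionG2 Ω d C)
    (x : Fin n → ℝ) (hx : ∑ i, x i = 0) :
    vecNorm (Matrix.vecMul x (biadj Ω)) ≤ (C * Real.sqrt d) * vecNorm x := by
  set G := biadj Ω with hGdef
  set y := Matrix.vecMul x G with hy_def
  have hrowsum : ∀ i, ∑ j, G i j = (d : ℝ) := by
    intro i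
    have := congrFun hG1.2.1 i
    simpa [Matrix.mulVec, dotProduct] using this
  have hysum : ∑ j, y j = 0 := by
    rw [hy_def]
    unfold Matrix.vecMul dotProduct
    rw [Finset.sum_comm]
    calc ∑ i, ∑ j, x i * G i j = ∑ i, x i * (d:ℝ) := by
          refine Finset.sum_congr rfl fun i _ => ?_
          rw [← Finset.mul_sum, hrowsum i]
      _ = (∑ i, x i) * (d:ℝ) := by rw [Finset.sum_mul]
      _ = 0 := by rw [hx, zero_mul]
  have hs : 0 ≤ C * Real.sqrt d := mul_nonneg hC (Real.sqrt_nonneg _)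
  have hN2 : ∑ j, y j ^ 2 = ∑ i, x i * (G.mulVec y) i := by
    have h1 : dotProduct x (G.mulVec y) = dotProduct (Matrix.vecMul x G) y :=
      dotProduct_mulVec x G y
    unfold dotProduct at h1
    rw [← hy_def] at h1
    rw [h1]
    exact Finset.sum_congr rfl fun j _ => sq (y j)
  have hCS : ∑ i, x i * (G.mulVec y) i ≤ vecNorm x * vecNorm (G.mulVec y) :=
    sum_mul_le _ x (G.mulVec y)
  have hgapy : vecNorm (G.mulVec y) ≤ (C * Real.sqrt d) * vecNorm y :=
    gap_mulVec hn Ω hG1 hG2 y hysum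
  have hkey : vecNorm y ^ 2 ≤ (C * Real.sqrt d) * vecNorm x * vecNorm y := by
    rw [vecNorm_sq]
    calc ∑ j, y j ^ 2 = ∑ i, x i * (G.mulVec y) i := hN2
      _ ≤ vecNorm x * vecNorm (G.mulVec y) := hCS
      _ ≤ vecNorm x * ((C * Real.sqrt d) * vecNorm y) :=
          mul_le_mul_of_nonneg_left hgapy (vecNorm_nonneg x)
      _ = (C * Real.sqrt d) * vecNorm x * vecNorm y := by ring
  by_cases hy0 : vecNorm y = 0
  · rw [hy0]; exact mul_nonneg hs (vecNorm_nonneg x)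
  · have hypos : 0 < vecNorm y := lt_of_le_of_ne (vecNorm_nonneg y) (Ne.symm hy0)
    have := hkey
    rw [sq] at this
    exact le_of_mul_le_mul_right this hypos

lemma mixing {n : ℕ} (G : Matrix (Fin n) (Fin n) ℝ) (s : ℝ)
    (hgap : ∀ x : Fin n → ℝ, ∑ i, x i = 0 → vecNorm (Matrix.vecMul x G) ≤ s * vecNorm x)
    (x y : Fin n → ℝ) (hx : ∑ i, x i = 0) :
    |∑ i, ∑ j, x i * G i j * y j| ≤ s * vecNorm x * vecNorm y := by
  have hrw : ∑ i, ∑ j, x i * G i j * y j = ∑ j, (Matrix.vecMul x G) j * y j := by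
    rw [Finset.sum_comm]
    refine Finset.sum_congr rfl fun j _ => ?_
    unfold Matrix.vecMul dotProduct
    rw [Finset.sum_mul]
  rw [hrw]
  calc |∑ j, (Matrix.vecMul x G) j * y j| ≤ vecNorm (Matrix.vecMul x G) * vecNorm y :=
        abs_sum_mul_le _ _ _
    _ ≤ (s * vecNorm x) * vecNorm y :=
        mul_le_mul_of_nonneg_right (hgap x hx) (vecNorm_nonneg y)
    _ = s * vecNorm x * vecNorm y := by ring

end Stmt7Aux
namespace Stmt7Aux
open Finset Matrix

lemma ite_mul_one {c : Prop} [Decidable c] (b : ℝ) :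
    (if c then b else 0) = (if c then (1:ℝ) else 0) * b := by
  split_ifs <;> simp

lemma cs2 (x y u v : ℝ) : (x * u + y * v) ^ 2 ≤ (x ^ 2 + y ^ 2) * (u ^ 2 + v ^ 2) := by
  nlinarith [sq_nonneg (x * v - y * u)]

lemma half {n d r : ℕ} (hn : 0 < n) (hd : 0 < d) {C μ₀ δ : ℝ}
    (hC : 0 ≤ C) (hμ : 0 ≤ μ₀ * r / n)
    (U V : Matrix (Fin n) (Fin r) ℝ) (hU : Uᵀ * U = 1) (hV : Vᵀ * V = 1)
    (hA1U : IncoherentRows U μ₀) (hA1V : IncoherentRows V μ₀)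
    (hA2U : StrongIncoherence U d δ)
    (Ω : Finset (Fin n × Fin n))
    (hcol : ∀ j : Fin n, (Finset.univ.filter fun i => (i, j) ∈ Ω).card = d)
    (hgap : ∀ x : Fin n → ℝ, ∑ i, x i = 0 →
      vecNorm (Matrix.vecMul x (biadj Ω)) ≤ (C * Real.sqrt d) * vecNorm x)
    (Z : Matrix (Fin n) (Fin n) ℝ) (hZ : projT U V Z = Z) :
    frobNorm (Uᵀ * (((n : ℝ) / (d : ℝ)) • sampl Ω Z - Z)) ^ 2
      ≤ (δ ^ 2 + C ^ 2 * μ₀ ^ 2 * r ^ 2 / d) * frobNorm Z ^ 2 := by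
  have hdR : (0:ℝ) < d := by exact_mod_cast hd
  have hnR : (0:ℝ) < n := by exact_mod_cast hn
  set G := biadj Ω with hG_def
  set A := Uᵀ * Z with hA_def
  set B := Z - U * A with hB_def
  have hUB : Uᵀ * B = 0 := by
    rw [hB_def, Matrix.mul_sub, ← Matrix.mul_assoc, ← hA_def, hU, Matrix.one_mul, sub_self]
  have hZAB : Z = U * A + B := by rw [hB_def]; abel
  have hBV : B * (V * Vᵀ) = B := by
    have hB' : B = Z - U * Uᵀ * Z := by rw [hB_def, hA_def, Matrix.mul_assoc]
    have hz := hZ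
    unfold projT at hz
    calc B * (V * Vᵀ) = Z * (V * Vᵀ) - U * Uᵀ * Z * (V * Vᵀ) := by
          rw [hB', Matrix.sub_mul]
      _ = (U * Uᵀ * Z + Z * (V * Vᵀ) - U * Uᵀ * Z * (V * Vᵀ)) - U * Uᵀ * Z := by abel
      _ = Z - U * Uᵀ * Z := by rw [hz]
      _ = B := hB'.symm
  set Bt := B * V with hBt_def
  have hBt : B = Bt * Vᵀ := by rw [hBt_def, Matrix.mul_assoc, hBV]
  set W := ((n : ℝ) / (d : ℝ)) • sampl Ω Z - Z with hW_def
  set X := Uᵀ * sampl Ω B with hX_def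
  set Dmat : Matrix (Fin r) (Fin n) ℝ := Matrix.of fun k j =>
    ((((n : ℝ) / (d : ℝ)) • (∑ i ∈ (Finset.univ.filter fun i => (i, j) ∈ Ω),
      Matrix.vecMulVec (U i) (U i)) - 1).mulVec (fun m => A m j)) k with hD_def
  -- the decomposition U^T W = Dmat + (n/d) X
  have hdecomp : Uᵀ * W = Dmat + ((n : ℝ) / (d : ℝ)) • X := by
    ext k j
    have hZentry : ∀ i, Z i j = (∑ m, U i m * A m j) + B i j := by
      intro i
      calc Z i j = (U * A + B) i j := by rw [← hZAB]
        _ = (∑ m, U i m * A m j) + B i j := by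
            simp [Matrix.add_apply, Matrix.mul_apply]
    have hUW : (Uᵀ * W) k j
        = ((n : ℝ) / (d : ℝ)) * (∑ i ∈ (Finset.univ.filter fun i => (i, j) ∈ Ω),
            U i k * Z i j) - A k j := by
      have h1 : (Uᵀ * W) k j = ∑ i, U i k *
          (((n : ℝ) / (d : ℝ)) * (if (i, j) ∈ Ω then Z i j else 0) - Z i j) := by
        simp [Matrix.mul_apply, hW_def, Matrix.sub_apply, Matrix.smul_apply, sampl,
          Matrix.transpose_apply, smul_eq_mul]
      rw [h1]
      have h2 : ∀ i, U i k * (((n : ℝ) / (d : ℝ)) * (if (i, j) ∈ Ω then Z i j else 0) - Z i j)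
          = ((n : ℝ) / (d : ℝ)) * (if (i, j) ∈ Ω then U i k * Z i j else 0) - U i k * Z i j := by
        intro i; split_ifs <;> ring
      rw [Finset.sum_congr rfl fun i _ => h2 i, Finset.sum_sub_distrib, ← Finset.mul_sum,
        ← Finset.sum_filter]
      have h3 : ∑ i, U i k * Z i j = A k j := by
        rw [hA_def]; simp [Matrix.mul_apply, Matrix.transpose_apply]
      rw [h3]
    have hXentry : X k j = ∑ i ∈ (Finset.univ.filter fun i => (i, j) ∈ Ω), U i k * B i j := by
      rw [hX_def]
      simp only [Matrix.mul_apply, Matrix.transpose_apply, sampl, Matrix.of_apply,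
        mul_ite, mul_zero]
      rw [← Finset.sum_filter]
    have hDentry : Dmat k j = ((n : ℝ) / (d : ℝ)) *
        (∑ m, (∑ i ∈ (Finset.univ.filter fun i => (i, j) ∈ Ω), U i k * U i m) * A m j)
        - A k j := by
      rw [hD_def]
      simp only [Matrix.of_apply, Matrix.mulVec, dotProduct, Matrix.sub_apply,
        Matrix.smul_apply, Matrix.one_apply, Finset.sum_apply, smul_eq_mul,
        Matrix.vecMulVec_apply, sub_mul, ite_mul, one_mul, zero_mul]
      rw [Finset.sum_sub_distrib]
      congr 1
      · rw [Finset.mul_sum]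
        refine Finset.sum_congr rfl fun m _ => ?_
        have hs : (∑ i ∈ Finset.univ.filter (fun i => (i, j) ∈ Ω),
            Matrix.vecMulVec (U i) (U i)) k m
            = ∑ i ∈ Finset.univ.filter (fun i => (i, j) ∈ Ω), U i k * U i m := by
          rw [Matrix.sum_apply]
          exact Finset.sum_congr rfl fun i _ => rfl
        rw [hs]
        ring
      · simp [Finset.sum_ite_eq, Finset.mem_univ]
    rw [hUW]
    simp only [Matrix.add_apply, Matrix.smul_apply, smul_eq_mul]
    rw [hDentry, hXentry]
    have hsplit : ∑ i ∈ (Finset.univ.filter fun i => (i, j) ∈ Ω), U i k * Z i j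
        = (∑ m, (∑ i ∈ (Finset.univ.filter fun i => (i, j) ∈ Ω), U i k * U i m) * A m j)
          + ∑ i ∈ (Finset.univ.filter fun i => (i, j) ∈ Ω), U i k * B i j := by
      have h4 : ∀ i, U i k * Z i j
          = (∑ m, U i k * U i m * A m j) + U i k * B i j := by
        intro i
        rw [hZentry i, mul_add, Finset.mul_sum]
        congr 1
        exact Finset.sum_congr rfl fun m _ => by ring
      rw [Finset.sum_congr rfl fun i _ => h4 i, Finset.sum_add_distrib]
      congr 1
      rw [Finset.sum_comm]
      exact Finset.sum_congr rfl fun m _ => by rw [Finset.sum_mul]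
    rw [hsplit]
    ring
  -- nonnegativity of δ
  have hδ0 : 0 ≤ δ := by
    have j0 : Fin n := ⟨0, hn⟩
    exact le_trans (specNorm_nonneg _) (hA2U _ (hcol j0))
  -- bound the Dmat part
  have hDbound : frobNorm Dmat ≤ δ * frobNorm A := by
    have hcolb : ∀ j, ∑ k, Dmat k j ^ 2 ≤ δ ^ 2 * ∑ m, A m j ^ 2 := by
      intro j
      have h1 : vecNorm (fun k => Dmat k j) ≤ δ * vecNorm (fun m => A m j) := by
        have hcolD : (fun k => Dmat k j) = ((((n : ℝ) / (d : ℝ)) •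
            (∑ i ∈ (Finset.univ.filter fun i => (i, j) ∈ Ω),
              Matrix.vecMulVec (U i) (U i)) - 1).mulVec (fun m => A m j)) := rfl
        rw [hcolD]
        calc vecNorm _ ≤ specNorm ((((n : ℝ) / (d : ℝ)) •
              (∑ i ∈ (Finset.univ.filter fun i => (i, j) ∈ Ω),
                Matrix.vecMulVec (U i) (U i)) - 1)) * vecNorm (fun m => A m j) :=
              vecNorm_mulVec_le _ _
          _ ≤ δ * vecNorm (fun m => A m j) :=
              mul_le_mul_of_nonneg_right (hA2U _ (hcol j)) (vecNorm_nonneg _)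
      have h2 := pow_le_pow_left₀ (vecNorm_nonneg _) h1 2
      rw [mul_pow, vecNorm_sq, vecNorm_sq] at h2
      exact h2
    have hF : frobNorm Dmat ^ 2 ≤ (δ * frobNorm A) ^ 2 := by
      rw [frobNorm_sq, mul_pow, frobNorm_sq]
      calc ∑ k, ∑ j, Dmat k j ^ 2 = ∑ j, ∑ k, Dmat k j ^ 2 := Finset.sum_comm
        _ ≤ ∑ j, δ ^ 2 * ∑ m, A m j ^ 2 := Finset.sum_le_sum fun j _ => hcolb j
        _ = δ ^ 2 * ∑ j, ∑ m, A m j ^ 2 := by rw [← Finset.mul_sum]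
        _ = δ ^ 2 * ∑ m, ∑ j, A m j ^ 2 := by rw [Finset.sum_comm]
    exact le_of_pow_le_pow_left₀ (by norm_num) (mul_nonneg hδ0 (frobNorm_nonneg A)) hF
  -- the mixing bound on X
  have hGB : ∀ i j, (if (i, j) ∈ Ω then B i j else 0) = G i j * B i j := by
    intro i j
    rw [hG_def]
    simp only [biadj, Matrix.of_apply]
    split_ifs <;> simp
  have hBentry : ∀ i j, B i j = ∑ l, Bt i l * V j l := by
    intro i j
    conv_lhs => rw [hBt]
    simp [Matrix.mul_apply, Matrix.transpose_apply]
  have hXform : ∀ k j, X k j = ∑ i, ∑ l, (Bt i l * U i k) * G i j * (V j l * 1) := by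
    intro k j
    rw [hX_def]
    simp only [Matrix.mul_apply, Matrix.transpose_apply, sampl, Matrix.of_apply]
    refine Finset.sum_congr rfl fun i _ => ?_
    rw [hGB i j, hBentry i j, Finset.mul_sum, Finset.mul_sum]
    exact Finset.sum_congr rfl fun l _ => by ring
  have hsum0 : ∀ (l k : Fin r), ∑ i, Bt i l * U i k = 0 := by
    intro l k
    have hUBt : Uᵀ * Bt = 0 := by
      rw [hBt_def, ← Matrix.mul_assoc, hUB, Matrix.zero_mul]
    have : (Uᵀ * Bt) k l = 0 := by rw [hUBt]; rfl
    rw [← this]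
    simp [Matrix.mul_apply, Matrix.transpose_apply, mul_comm]
  -- pairing identity
  have hpair : ∀ Y : Matrix (Fin r) (Fin n) ℝ,
      ∑ k, ∑ j, X k j * Y k j
        = ∑ l, ∑ k, ∑ i, ∑ j, (Bt i l * U i k) * G i j * (V j l * Y k j) := by
    intro Y
    calc ∑ k, ∑ j, X k j * Y k j
        = ∑ k, ∑ j, ∑ i, ∑ l, (Bt i l * U i k) * G i j * (V j l * Y k j) := by
          refine Finset.sum_congr rfl fun k _ => Finset.sum_congr rfl fun j _ => ?_
          rw [hXform k j, Finset.sum_mul]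
          refine Finset.sum_congr rfl fun i _ => ?_
          rw [Finset.sum_mul]
          exact Finset.sum_congr rfl fun l _ => by ring
      _ = ∑ k, ∑ j, ∑ l, ∑ i, (Bt i l * U i k) * G i j * (V j l * Y k j) := by
          exact Finset.sum_congr rfl fun k _ => Finset.sum_congr rfl fun j _ =>
            Finset.sum_comm
      _ = ∑ k, ∑ l, ∑ j, ∑ i, (Bt i l * U i k) * G i j * (V j l * Y k j) := by
          exact Finset.sum_congr rfl fun k _ => Finset.sum_comm
      _ = ∑ l, ∑ k, ∑ j, ∑ i, (Bt i l * U i k) * G i j * (V j l * Y k j) := by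
          exact Finset.sum_comm
      _ = ∑ l, ∑ k, ∑ i, ∑ j, (Bt i l * U i k) * G i j * (V j l * Y k j) := by
          exact Finset.sum_congr rfl fun l _ => Finset.sum_congr rfl fun k _ =>
            Finset.sum_comm
  -- incoherence bounds for the paired vectors
  have hx2 : ∑ l, ∑ k, vecNorm (fun i => Bt i l * U i k) ^ 2
      ≤ (μ₀ * r / n) * (frobNorm Bt ^ 2) := by
    rw [frobNorm_sq]
    calc ∑ l, ∑ k, vecNorm (fun i => Bt i l * U i k) ^ 2
        = ∑ l, ∑ k, ∑ i, Bt i l ^ 2 * U i k ^ 2 := by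
          refine Finset.sum_congr rfl fun l _ => Finset.sum_congr rfl fun k _ => ?_
          rw [vecNorm_sq]
          exact Finset.sum_congr rfl fun i _ => by rw [mul_pow]
      _ = ∑ l, ∑ i, ∑ k, Bt i l ^ 2 * U i k ^ 2 :=
          Finset.sum_congr rfl fun l _ => Finset.sum_comm
      _ = ∑ i, ∑ l, ∑ k, Bt i l ^ 2 * U i k ^ 2 := Finset.sum_comm
      _ = ∑ i, (∑ l, Bt i l ^ 2) * (∑ k, U i k ^ 2) := by
          refine Finset.sum_congr rfl fun i _ => ?_
          calc ∑ l, ∑ k, Bt i l ^ 2 * U i k ^ 2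
              = ∑ l, Bt i l ^ 2 * ∑ k, U i k ^ 2 :=
                Finset.sum_congr rfl fun l _ => by rw [← Finset.mul_sum]
            _ = (∑ l, Bt i l ^ 2) * (∑ k, U i k ^ 2) := by rw [← Finset.sum_mul]
      _ ≤ ∑ i, (∑ l, Bt i l ^ 2) * (μ₀ * r / n) := by
          refine Finset.sum_le_sum fun i _ => ?_
          exact mul_le_mul_of_nonneg_left (hA1U i) (N2_nonneg _)
      _ = (μ₀ * r / n) * ∑ i, ∑ l, Bt i l ^ 2 := by
          rw [Finset.mul_sum]
          exact Finset.sum_congr rfl fun i _ => by ring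
  have hy2 : ∀ Y : Matrix (Fin r) (Fin n) ℝ,
      ∑ l, ∑ k, vecNorm (fun j => V j l * Y k j) ^ 2
        ≤ (μ₀ * r / n) * (frobNorm Y ^ 2) := by
    intro Y
    rw [frobNorm_sq]
    calc ∑ l, ∑ k, vecNorm (fun j => V j l * Y k j) ^ 2
        = ∑ l, ∑ k, ∑ j, V j l ^ 2 * Y k j ^ 2 := by
          refine Finset.sum_congr rfl fun l _ => Finset.sum_congr rfl fun k _ => ?_
          rw [vecNorm_sq]
          exact Finset.sum_congr rfl fun j _ => by rw [mul_pow]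
      _ = ∑ l, ∑ j, ∑ k, V j l ^ 2 * Y k j ^ 2 :=
          Finset.sum_congr rfl fun l _ => Finset.sum_comm
      _ = ∑ j, ∑ l, ∑ k, V j l ^ 2 * Y k j ^ 2 := Finset.sum_comm
      _ = ∑ j, (∑ l, V j l ^ 2) * (∑ k, Y k j ^ 2) := by
          refine Finset.sum_congr rfl fun j _ => ?_
          calc ∑ l, ∑ k, V j l ^ 2 * Y k j ^ 2
              = ∑ l, V j l ^ 2 * ∑ k, Y k j ^ 2 :=
                Finset.sum_congr rfl fun l _ => by rw [← Finset.mul_sum]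
            _ = (∑ l, V j l ^ 2) * (∑ k, Y k j ^ 2) := by rw [← Finset.sum_mul]
      _ ≤ ∑ j, (μ₀ * r / n) * (∑ k, Y k j ^ 2) := by
          refine Finset.sum_le_sum fun j _ => ?_
          exact mul_le_mul_of_nonneg_right (hA1V j) (N2_nonneg _)
      _ = (μ₀ * r / n) * ∑ j, ∑ k, Y k j ^ 2 := by rw [← Finset.mul_sum]
      _ = (μ₀ * r / n) * ∑ k, ∑ j, Y k j ^ 2 := by rw [Finset.sum_comm]
  -- the key duality bound
  have hXY : ∀ Y : Matrix (Fin r) (Fin n) ℝ,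
      |∑ k, ∑ j, X k j * Y k j|
        ≤ (C * Real.sqrt d) * (μ₀ * r / n) * frobNorm Bt * frobNorm Y := by
    intro Y
    rw [hpair Y]
    have habs : |∑ l, ∑ k, ∑ i, ∑ j, (Bt i l * U i k) * G i j * (V j l * Y k j)|
        ≤ ∑ l, ∑ k, |∑ i, ∑ j, (Bt i l * U i k) * G i j * (V j l * Y k j)| := by
      calc |∑ l, ∑ k, ∑ i, ∑ j, (Bt i l * U i k) * G i j * (V j l * Y k j)|
          ≤ ∑ l, |∑ k, ∑ i, ∑ j, (Bt i l * U i k) * G i j * (V j l * Y k j)| :=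
            Finset.abs_sum_le_sum_abs _ _
        _ ≤ ∑ l, ∑ k, |∑ i, ∑ j, (Bt i l * U i k) * G i j * (V j l * Y k j)| :=
            Finset.sum_le_sum fun l _ => Finset.abs_sum_le_sum_abs _ _
    have hmix : ∀ (l k : Fin r),
        |∑ i, ∑ j, (Bt i l * U i k) * G i j * (V j l * Y k j)|
          ≤ (C * Real.sqrt d) * vecNorm (fun i => Bt i l * U i k)
              * vecNorm (fun j => V j l * Y k j) := by
      intro l k
      exact mixing G (C * Real.sqrt d) hgap _ _ (hsum0 l k)
    have hstep2 : ∑ l, ∑ k, |∑ i, ∑ j, (Bt i l * U i k) * G i j * (V j l * Y k j)|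
        ≤ (C * Real.sqrt d) * ∑ l, ∑ k,
            vecNorm (fun i => Bt i l * U i k) * vecNorm (fun j => V j l * Y k j) := by
      rw [Finset.mul_sum]
      refine Finset.sum_le_sum fun l _ => ?_
      rw [Finset.mul_sum]
      refine Finset.sum_le_sum fun k _ => ?_
      calc |∑ i, ∑ j, (Bt i l * U i k) * G i j * (V j l * Y k j)|
          ≤ (C * Real.sqrt d) * vecNorm (fun i => Bt i l * U i k)
              * vecNorm (fun j => V j l * Y k j) := hmix l k
        _ = (C * Real.sqrt d) * (vecNorm (fun i => Bt i l * U i k)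
              * vecNorm (fun j => V j l * Y k j)) := by ring
    -- Cauchy–Schwarz over the (l,k) pairs
    have hCS : ∑ l, ∑ k, vecNorm (fun i => Bt i l * U i k) * vecNorm (fun j => V j l * Y k j)
        ≤ Real.sqrt (∑ l, ∑ k, vecNorm (fun i => Bt i l * U i k) ^ 2)
          * Real.sqrt (∑ l, ∑ k, vecNorm (fun j => V j l * Y k j) ^ 2) := by
      have h := sum_mul_le (Fin r × Fin r)
        (fun p => vecNorm (fun i => Bt i p.1 * U i p.2))
        (fun p => vecNorm (fun j => V j p.1 * Y p.2 j))
      rw [Fintype.sum_prod_type] at h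
      unfold vecNorm at h
      rw [Fintype.sum_prod_type, Fintype.sum_prod_type] at h
      exact h
    have hsx : Real.sqrt (∑ l, ∑ k, vecNorm (fun i => Bt i l * U i k) ^ 2)
        ≤ Real.sqrt (μ₀ * r / n) * frobNorm Bt := by
      calc Real.sqrt (∑ l, ∑ k, vecNorm (fun i => Bt i l * U i k) ^ 2)
          ≤ Real.sqrt ((μ₀ * r / n) * (frobNorm Bt ^ 2)) := Real.sqrt_le_sqrt hx2
        _ = Real.sqrt (μ₀ * r / n) * frobNorm Bt := by
            rw [Real.sqrt_mul hμ, Real.sqrt_sq (frobNorm_nonneg Bt)]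
    have hsy : Real.sqrt (∑ l, ∑ k, vecNorm (fun j => V j l * Y k j) ^ 2)
        ≤ Real.sqrt (μ₀ * r / n) * frobNorm Y := by
      calc Real.sqrt (∑ l, ∑ k, vecNorm (fun j => V j l * Y k j) ^ 2)
          ≤ Real.sqrt ((μ₀ * r / n) * (frobNorm Y ^ 2)) := Real.sqrt_le_sqrt (hy2 Y)
        _ = Real.sqrt (μ₀ * r / n) * frobNorm Y := by
            rw [Real.sqrt_mul hμ, Real.sqrt_sq (frobNorm_nonneg Y)]
    have hCd : 0 ≤ C * Real.sqrt d := mul_nonneg hC (Real.sqrt_nonneg _)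
    calc |∑ l, ∑ k, ∑ i, ∑ j, (Bt i l * U i k) * G i j * (V j l * Y k j)|
        ≤ ∑ l, ∑ k, |∑ i, ∑ j, (Bt i l * U i k) * G i j * (V j l * Y k j)| := habs
      _ ≤ (C * Real.sqrt d) * ∑ l, ∑ k,
            vecNorm (fun i => Bt i l * U i k) * vecNorm (fun j => V j l * Y k j) := hstep2
      _ ≤ (C * Real.sqrt d) * (Real.sqrt (∑ l, ∑ k, vecNorm (fun i => Bt i l * U i k) ^ 2)
            * Real.sqrt (∑ l, ∑ k, vecNorm (fun j => V j l * Y k j) ^ 2)) :=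
          mul_le_mul_of_nonneg_left hCS hCd
      _ ≤ (C * Real.sqrt d) * ((Real.sqrt (μ₀ * r / n) * frobNorm Bt)
            * (Real.sqrt (μ₀ * r / n) * frobNorm Y)) := by
          refine mul_le_mul_of_nonneg_left ?_ hCd
          exact mul_le_mul hsx hsy (Real.sqrt_nonneg _)
            (mul_nonneg (Real.sqrt_nonneg _) (frobNorm_nonneg _))
      _ = (C * Real.sqrt d) * ((Real.sqrt (μ₀ * r / n) * Real.sqrt (μ₀ * r / n))
            * frobNorm Bt * frobNorm Y) := by ring
      _ = (C * Real.sqrt d) * (μ₀ * r / n) * frobNorm Bt * frobNorm Y := by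
          rw [Real.mul_self_sqrt hμ]; ring
  -- deduce the bound on ‖X‖
  have hXbound : frobNorm X ≤ (C * Real.sqrt d) * (μ₀ * r / n) * frobNorm Bt := by
    have hK : 0 ≤ (C * Real.sqrt d) * (μ₀ * r / n) * frobNorm Bt :=
      mul_nonneg (mul_nonneg (mul_nonneg hC (Real.sqrt_nonneg _)) hμ) (frobNorm_nonneg _)
    by_cases hX0 : frobNorm X = 0
    · rw [hX0]; exact hK
    · have hXpos : 0 < frobNorm X := lt_of_le_of_ne (frobNorm_nonneg X) (Ne.symm hX0)
      have h1 : frobNorm X ^ 2 ≤ ((C * Real.sqrt d) * (μ₀ * r / n) * frobNorm Bt)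
          * frobNorm X := by
        have h2 := hXY X
        have h3 : ∑ k, ∑ j, X k j * X k j = frobNorm X ^ 2 := by
          rw [frobNorm_sq]
          exact Finset.sum_congr rfl fun k _ => Finset.sum_congr rfl fun j _ => (sq _).symm
        rw [h3] at h2
        calc frobNorm X ^ 2 = |frobNorm X ^ 2| := (abs_of_nonneg (sq_nonneg _)).symm
          _ ≤ (C * Real.sqrt d) * (μ₀ * r / n) * frobNorm Bt * frobNorm X := h2
      rw [sq] at h1
      exact le_of_mul_le_mul_right h1 hXpos
  -- frobNorm Bt = frobNorm B
  have hBtB : frobNorm Bt = frobNorm B := by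
    have h1 : frobNorm B ^ 2 = frobNorm Bt ^ 2 := by
      rw [frobNorm_sq, frobNorm_sq]
      conv_lhs => rw [hBt]
      exact F2_mul_right V hV Bt
    exact le_antisymm
      (le_of_pow_le_pow_left₀ (by norm_num) (frobNorm_nonneg B) (le_of_eq h1.symm))
      (le_of_pow_le_pow_left₀ (by norm_num) (frobNorm_nonneg Bt) (le_of_eq h1))
  -- orthogonal decomposition of Z
  have horth : frobNorm A ^ 2 + frobNorm B ^ 2 = frobNorm Z ^ 2 := by
    have hcross : (U * A)ᵀ * B = 0 := by
      rw [Matrix.transpose_mul, Matrix.mul_assoc, hUB, Matrix.mul_zero]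
    have h1 : frobNorm Z ^ 2 = frobNorm (U * A) ^ 2 + frobNorm B ^ 2 := by
      rw [frobNorm_sq, frobNorm_sq, frobNorm_sq]
      conv_lhs => rw [hZAB]
      rw [F2_add, hcross, Matrix.trace_zero, mul_zero, add_zero]
    have h2 : frobNorm (U * A) ^ 2 = frobNorm A ^ 2 := by
      rw [frobNorm_sq, frobNorm_sq]
      exact F2_mul_left U hU A
    rw [h1, h2]
  -- assemble
  set c' := ((n : ℝ) / (d : ℝ)) * ((C * Real.sqrt d) * (μ₀ * r / n)) with hc'_def
  have hc'0 : 0 ≤ c' := by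
    rw [hc'_def]
    exact mul_nonneg (le_of_lt (div_pos hnR hdR))
      (mul_nonneg (mul_nonneg hC (Real.sqrt_nonneg _)) hμ)
  have htri : frobNorm (Uᵀ * W) ≤ δ * frobNorm A + c' * frobNorm B := by
    calc frobNorm (Uᵀ * W) = frobNorm (Dmat + ((n : ℝ) / (d : ℝ)) • X) := by rw [hdecomp]
      _ ≤ frobNorm Dmat + frobNorm (((n : ℝ) / (d : ℝ)) • X) := frobNorm_add_le _ _
      _ = frobNorm Dmat + ((n : ℝ) / (d : ℝ)) * frobNorm X := by
          rw [frobNorm_smul, abs_of_pos (div_pos hnR hdR)]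
      _ ≤ δ * frobNorm A + ((n : ℝ) / (d : ℝ))
            * ((C * Real.sqrt d) * (μ₀ * r / n) * frobNorm Bt) := by
          refine add_le_add hDbound ?_
          exact mul_le_mul_of_nonneg_left hXbound (le_of_lt (div_pos hnR hdR))
      _ = δ * frobNorm A + c' * frobNorm B := by rw [hBtB, hc'_def]; ring
  have hc'sq : c' ^ 2 = C ^ 2 * μ₀ ^ 2 * r ^ 2 / d := by
    have hsd : (Real.sqrt d) ^ 2 = (d : ℝ) := Real.sq_sqrt hdR.le
    have h1 : c' ^ 2 = ((n : ℝ) / d) ^ 2 * (C ^ 2 * ((Real.sqrt d) ^ 2) * ((μ₀ * r / n) ^ 2)) := by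
      rw [hc'_def]; ring
    rw [h1, hsd]
    field_simp
  have hfin : frobNorm (Uᵀ * W) ^ 2 ≤ (δ ^ 2 + c' ^ 2) * frobNorm Z ^ 2 := by
    calc frobNorm (Uᵀ * W) ^ 2 ≤ (δ * frobNorm A + c' * frobNorm B) ^ 2 :=
          pow_le_pow_left₀ (frobNorm_nonneg _) htri 2
      _ ≤ (δ ^ 2 + c' ^ 2) * (frobNorm A ^ 2 + frobNorm B ^ 2) :=
          cs2 δ c' (frobNorm A) (frobNorm B)
      _ = (δ ^ 2 + c' ^ 2) * frobNorm Z ^ 2 := by rw [horth]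
  rw [← hc'sq]
  exact hfin

end Stmt7Aux
/-- Lemma 1: near-isometry of `(n/d)·P_T P_Ω` on the subspace `T`. -/
theorem stmt_7 {n d r : ℕ} (hn : 0 < n) (hd : 0 < d) (hr : 0 < r) {C μ₀ δ : ℝ} (hC : 0 < C)
    (M : Matrix (Fin n) (Fin n) ℝ) (U V : Matrix (Fin n) (Fin r) ℝ) (s : Fin r → ℝ)
    (hSVD : IsThinSVD M U s V) (hrank : M.rank = r)
    (hA1U : IncoherentRows U μ₀) (hA1V : IncoherentRows V μ₀)
    (hA2U : StrongIncoherence U d δ) (hA2V : StrongIncoherence V d δ)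
    (Ω : Finset (Fin n × Fin n)) (hreg : RegularSampling Ω d)
    (hG1 : AssumptionG1 Ω d) (hG2 : AssumptionG2 Ω d C) :
    ∀ Z : Matrix (Fin n) (Fin n) ℝ, projT U V Z = Z →
      frobNorm (((n : ℝ) / (d : ℝ)) • projT U V (sampl Ω Z) - Z) ≤
        Real.sqrt (2 * (δ ^ 2 + C ^ 2 * μ₀ ^ 2 * r ^ 2 / d)) * frobNorm Z := by
  intro Z hZ
  obtain ⟨hU, hV, -, -⟩ := hSVD
  obtain ⟨hrow, hcolreg⟩ := hreg
  have hC0 : 0 ≤ C := hC.le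
  have hdR : (0:ℝ) < d := by exact_mod_cast hd
  have hnR : (0:ℝ) < n := by exact_mod_cast hn
  have hμ0 : 0 ≤ μ₀ * r / n := le_trans (Stmt7Aux.N2_nonneg (fun k => U ⟨0, hn⟩ k)) (hA1U ⟨0, hn⟩)
  set W : Matrix (Fin n) (Fin n) ℝ := ((n : ℝ) / (d : ℝ)) • sampl Ω Z - Z with hW_def
  clear_value W
  -- linearity of projT
  have hlin : projT U V W = ((n : ℝ) / (d : ℝ)) • projT U V (sampl Ω Z) - projT U V Z := by
    rw [hW_def]
    unfold projT
    simp only [Matrix.mul_sub, Matrix.sub_mul, Matrix.mul_smul, Matrix.smul_mul, smul_sub,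
      smul_add]
    abel
  have hLHS : ((n : ℝ) / (d : ℝ)) • projT U V (sampl Ω Z) - Z = projT U V W := by
    rw [hlin, hZ]
  -- first half bound
  have h1 := Stmt7Aux.half hn hd hC0 hμ0 U V hU hV hA1U hA1V hA2U Ω hcolreg
    (fun x hx => Stmt7Aux.gap_vecMul hn hC0 Ω hG1 hG2 x hx) Z hZ
  rw [← hW_def] at h1
  -- transposed data
  set Ω' : Finset (Fin n × Fin n) := Ω.map (Equiv.prodComm (Fin n) (Fin n)).toEmbedding
    with hΩ'_def
  have hmem' : ∀ i j : Fin n, ((i, j) ∈ Ω') ↔ ((j, i) ∈ Ω) := by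
    intro i j
    rw [hΩ'_def, Finset.mem_map_equiv]
    rfl
  have hbiadjT : biadj Ω' = (biadj Ω)ᵀ := by
    ext i j
    simp only [biadj, Matrix.of_apply, Matrix.transpose_apply, hmem']
  have hsamplT : sampl Ω' Zᵀ = (sampl Ω Z)ᵀ := by
    ext i j
    simp only [sampl, Matrix.of_apply, Matrix.transpose_apply, hmem']
  have hcol' : ∀ j : Fin n, (Finset.univ.filter fun i => (i, j) ∈ Ω').card = d := by
    intro j
    have : (Finset.univ.filter fun i => (i, j) ∈ Ω')
        = (Finset.univ.filter fun i => (j, i) ∈ Ω) := by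
      refine Finset.filter_congr fun i _ => ?_
      simp [hmem']
    rw [this]
    exact hrow j
  have hgap' : ∀ x : Fin n → ℝ, ∑ i, x i = 0 →
      vecNorm (Matrix.vecMul x (biadj Ω')) ≤ (C * Real.sqrt d) * vecNorm x := by
    intro x hx
    rw [hbiadjT, Matrix.vecMul_transpose]
    exact Stmt7Aux.gap_mulVec hn Ω hG1 hG2 x hx
  have hZT : projT V U Zᵀ = Zᵀ := by
    have h : projT V U Zᵀ = (projT U V Z)ᵀ := by
      unfold projT
      rw [Matrix.transpose_sub, Matrix.transpose_add]
      simp only [Matrix.transpose_mul, Matrix.transpose_transpose, Matrix.mul_assoc]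
      abel
    rw [h, hZ]
  have h2 := Stmt7Aux.half hn hd hC0 hμ0 V U hV hU hA1V hA1U hA2V Ω' hcol' hgap' Zᵀ hZT
  -- rewrite h2 in terms of W * V
  have hWT : ((n : ℝ) / (d : ℝ)) • sampl Ω' Zᵀ - Zᵀ = Wᵀ := by
    rw [hsamplT, hW_def, Matrix.transpose_sub, Matrix.transpose_smul]
  have hVWT : Vᵀ * Wᵀ = (W * V)ᵀ := (Matrix.transpose_mul W V).symm
  have h2' : frobNorm (W * V) ^ 2 ≤ (δ ^ 2 + C ^ 2 * μ₀ ^ 2 * r ^ 2 / d) * frobNorm Z ^ 2 := by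
    have := h2
    rw [hWT, hVWT, Stmt7Aux.frobNorm_transpose, Stmt7Aux.frobNorm_transpose] at this
    exact this
  -- step 1: ‖P_T W‖² ≤ ‖Uᵀ W‖² + ‖W V‖²
  set P : Matrix (Fin n) (Fin n) ℝ := U * (Uᵀ * W) with hP_def
  clear_value P
  set R : Matrix (Fin n) (Fin r) ℝ := W * V - U * (Uᵀ * (W * V)) with hR_def
  clear_value R
  have hPQ : projT U V W = P + R * Vᵀ := by
    rw [hP_def, hR_def]
    unfold projT
    rw [Matrix.sub_mul]
    simp only [Matrix.mul_assoc]
    abel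
  have hUR : Uᵀ * R = 0 := by
    rw [hR_def, Matrix.mul_sub, ← Matrix.mul_assoc Uᵀ U, hU, Matrix.one_mul, sub_self]
  have hcross0 : Pᵀ * (R * Vᵀ) = 0 := by
    rw [hP_def, Matrix.transpose_mul, Matrix.mul_assoc, ← Matrix.mul_assoc Uᵀ R Vᵀ, hUR,
      Matrix.zero_mul, Matrix.mul_zero]
  have hF2P : ∑ i, ∑ j, P i j ^ 2 = ∑ i, ∑ j, (Uᵀ * W) i j ^ 2 := by
    rw [hP_def]
    exact Stmt7Aux.F2_mul_left U hU (Uᵀ * W)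
  have hF2RV : ∑ i, ∑ j, (R * Vᵀ) i j ^ 2 = ∑ i, ∑ j, R i j ^ 2 :=
    Stmt7Aux.F2_mul_right V hV R
  have hF2R : ∑ i, ∑ j, R i j ^ 2 ≤ ∑ i, ∑ j, (W * V) i j ^ 2 := by
    set Q : Matrix (Fin n) (Fin r) ℝ := W * V with hQ_def
    clear_value Q
    set S : Matrix (Fin n) (Fin r) ℝ := U * (Uᵀ * Q) with hS_def
    clear_value S
    have hRQS : R = Q + (-1 : ℝ) • S := by
      rw [hR_def, hQ_def, hS_def, neg_one_smul, ← sub_eq_add_neg]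
    have htr : (Qᵀ * S).trace = ∑ i, ∑ j, (Uᵀ * Q) i j ^ 2 := by
      have he : Qᵀ * S = (Uᵀ * Q)ᵀ * (Uᵀ * Q) := by
        rw [hS_def, Matrix.transpose_mul, Matrix.transpose_transpose, Matrix.mul_assoc]
      rw [he, ← Stmt7Aux.F2_eq_trace]
    have hF2S : ∑ i, ∑ j, S i j ^ 2 = ∑ i, ∑ j, (Uᵀ * Q) i j ^ 2 := by
      rw [hS_def]
      exact Stmt7Aux.F2_mul_left U hU (Uᵀ * Q)
    have hF2negS : ∑ i, ∑ j, ((-1 : ℝ) • S) i j ^ 2 = ∑ i, ∑ j, S i j ^ 2 := by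
      refine Finset.sum_congr rfl fun i _ => Finset.sum_congr rfl fun j _ => ?_
      simp [Matrix.smul_apply]
    have htrneg : (Qᵀ * ((-1 : ℝ) • S)).trace = -(Qᵀ * S).trace := by
      rw [Matrix.mul_smul, Matrix.trace_smul]
      simp
    rw [hRQS, Stmt7Aux.F2_add, hF2negS, hF2S, htrneg, htr]
    have h0 : 0 ≤ ∑ i, ∑ j, (Uᵀ * Q) i j ^ 2 := Stmt7Aux.F2_nonneg _
    linarith
  have hstep1 : frobNorm (projT U V W) ^ 2
      ≤ frobNorm (Uᵀ * W) ^ 2 + frobNorm (W * V) ^ 2 := by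
    rw [Stmt7Aux.frobNorm_sq, Stmt7Aux.frobNorm_sq, Stmt7Aux.frobNorm_sq, hPQ,
      Stmt7Aux.F2_add, hcross0, Matrix.trace_zero, mul_zero, add_zero, hF2P, hF2RV]
    have := hF2R
    linarith
  -- combine
  set K := δ ^ 2 + C ^ 2 * μ₀ ^ 2 * r ^ 2 / d with hK_def
  have hK0 : 0 ≤ K := by
    rw [hK_def]
    have : 0 ≤ C ^ 2 * μ₀ ^ 2 * r ^ 2 / d := by positivity
    nlinarith [sq_nonneg δ]
  have htotal : frobNorm (projT U V W) ^ 2 ≤ 2 * K * frobNorm Z ^ 2 := by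
    calc frobNorm (projT U V W) ^ 2 ≤ frobNorm (Uᵀ * W) ^ 2 + frobNorm (W * V) ^ 2 := hstep1
      _ ≤ K * frobNorm Z ^ 2 + K * frobNorm Z ^ 2 := add_le_add h1 h2'
      _ = 2 * K * frobNorm Z ^ 2 := by ring
  rw [hLHS]
  have hsqrt : frobNorm (projT U V W) = Real.sqrt (frobNorm (projT U V W) ^ 2) :=
    (Real.sqrt_sq (Stmt7Aux.frobNorm_nonneg _)).symm
  rw [hsqrt]
  calc Real.sqrt (frobNorm (projT U V W) ^ 2) ≤ Real.sqrt (2 * K * frobNorm Z ^ 2) :=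
        Real.sqrt_le_sqrt htotal
    _ = Real.sqrt (2 * K) * frobNorm Z := by
        rw [Real.sqrt_mul (by linarith : (0:ℝ) ≤ 2 * K), Real.sqrt_sq (Stmt7Aux.frobNorm_nonneg Z)]
    _ = Real.sqrt (2 * (δ ^ 2 + C ^ 2 * μ₀ ^ 2 * r ^ 2 / d)) * frobNorm Z := by rw [hK_def]
end

section
/- Let U, V ∈ ℝ^{n×r} have orthonormal columns and satisfy assumption A1 (‖U^i‖² ≤ μ₀r/n and ‖V^j‖² ≤ μ₀r/n for all rows i, j). Let Ω be generated by a d-regular bipartite graph whose biadjacency matrix G satisfies G1 and G2 with constant C. Then for every X ∈ ℝ^{n×r}, ‖(I − UUᵀ)·(n/d)·P_Ω(UXᵀ)·VVᵀ‖_F² ≤ (C²μ₀²r²/d)·‖X‖_F². -/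
open Matrix
open scoped BigOperators

noncomputable section Stmt9Aux
open Matrix

lemma sumsq_nonneg {β : Type*} [Fintype β] (x : β → ℝ) : 0 ≤ ∑ i, x i ^ 2 :=
  Finset.sum_nonneg fun _ _ => sq_nonneg _

lemma vecNorm_nonneg' {β : Type*} [Fintype β] (x : β → ℝ) : 0 ≤ vecNorm x :=
  Real.sqrt_nonneg _

lemma vecNorm_sq {β : Type*} [Fintype β] (x : β → ℝ) : vecNorm x ^ 2 = ∑ i, x i ^ 2 :=
  Real.sq_sqrt (sumsq_nonneg x)

lemma vecNorm_le_of_sq_le {β : Type*} [Fintype β] {x : β → ℝ} {c : ℝ} (hc : 0 ≤ c)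
    (h : ∑ i, x i ^ 2 ≤ c ^ 2) : vecNorm x ≤ c := by
  have := Real.sqrt_le_sqrt h
  rwa [Real.sqrt_sq hc] at this

lemma sq_le_of_vecNorm_le {β : Type*} [Fintype β] {x : β → ℝ} {c : ℝ}
    (h : vecNorm x ≤ c) : ∑ i, x i ^ 2 ≤ c ^ 2 := by
  rw [← vecNorm_sq x]
  exact pow_le_pow_left₀ (vecNorm_nonneg' x) h 2

lemma vecNorm_le_vecNorm {β : Type*} [Fintype β] {x y : β → ℝ}
    (h : ∑ i, x i ^ 2 ≤ ∑ i, y i ^ 2) : vecNorm x ≤ vecNorm y :=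
  Real.sqrt_le_sqrt h

lemma specSet_bddAbove {m n : ℕ} (A : Matrix (Fin m) (Fin n) ℝ) :
    BddAbove {c | ∃ x : Fin n → ℝ, vecNorm x ≤ 1 ∧ c = vecNorm (A.mulVec x)} := by
  refine ⟨Real.sqrt (∑ i, ∑ j, A i j ^ 2), ?_⟩
  rintro c ⟨x, hx, rfl⟩
  apply vecNorm_le_of_sq_le (Real.sqrt_nonneg _)
  rw [Real.sq_sqrt (by positivity)]
  have hx1 : ∑ j, x j ^ 2 ≤ 1 := by simpa using sq_le_of_vecNorm_le hx
  calc ∑ i, (A.mulVec x) i ^ 2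
      ≤ ∑ i, (∑ j, A i j ^ 2) * (∑ j, x j ^ 2) := by
        refine Finset.sum_le_sum fun i _ => ?_
        simpa [Matrix.mulVec, dotProduct] using
          Finset.sum_mul_sq_le_sq_mul_sq Finset.univ (fun j => A i j) x
    _ ≤ ∑ i, (∑ j, A i j ^ 2) * 1 :=
        Finset.sum_le_sum fun i _ => mul_le_mul_of_nonneg_left hx1 (by positivity)
    _ = ∑ i, ∑ j, A i j ^ 2 := by simp

lemma vecNorm_mulVec_le_specNorm {m n : ℕ} (A : Matrix (Fin m) (Fin n) ℝ)
    {x : Fin n → ℝ} (hx : vecNorm x ≤ 1) : vecNorm (A.mulVec x) ≤ specNorm A :=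
  le_csSup (specSet_bddAbove A) ⟨x, hx, rfl⟩

lemma sigmaSet_bddAbove {m n : ℕ} (A : Matrix (Fin m) (Fin n) ℝ) (v : Fin n → ℝ) :
    BddAbove {c | ∃ x : Fin n → ℝ,
      vecNorm x ≤ 1 ∧ (∑ i, v i * x i) = 0 ∧ c = vecNorm (A.mulVec x)} :=
  (specSet_bddAbove A).mono (by rintro c ⟨x, hx, _, hc⟩; exact ⟨x, hx, hc⟩)

lemma sigma2_nonneg {m n : ℕ} (A : Matrix (Fin m) (Fin n) ℝ) : 0 ≤ sigma2 A := by
  refine le_ciInf fun v => le_csSup (sigmaSet_bddAbove A v) ⟨0, ?_, by simp, ?_⟩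
  · simp [vecNorm]
  · simp [vecNorm]

lemma key_sigma2 {n : ℕ} (hn : 0 < n) {dd : ℝ}
    (G : Matrix (Fin n) (Fin n) ℝ)
    (hspec : specNorm G = dd)
    (hcol : ∀ j, ∑ i, G i j = dd)
    (hrow : ∀ i, ∑ j, G i j = dd)
    {x : Fin n → ℝ} (hx1 : ∑ j, x j ^ 2 = 1) (hx0 : ∑ j, x j = 0) :
    vecNorm (G.mulVec x) ≤ sigma2 G := by
  have hn' : (0:ℝ) < n := by exact_mod_cast hn
  have hsn : (0:ℝ) < Real.sqrt n := Real.sqrt_pos.2 hn'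
  set e : Fin n → ℝ := fun _ => (Real.sqrt n)⁻¹ with he
  have he2 : ∑ j, e j ^ 2 = 1 := by
    simp [he, Real.sq_sqrt hn'.le]
    field_simp [Real.sq_sqrt hn'.le]
  have hGe : G.mulVec e = fun i => dd * (Real.sqrt n)⁻¹ := by
    funext i
    simp [Matrix.mulVec, dotProduct, he, ← Finset.sum_mul, hrow i]
  have hGe2 : ∑ i, (G.mulVec e) i ^ 2 = dd ^ 2 := by
    rw [hGe]
    rw [Finset.sum_const, Finset.card_univ, Fintype.card_fin, nsmul_eq_mul]
    rw [mul_pow, inv_pow, Real.sq_sqrt hn'.le]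
    field_simp
  -- cross term vanishes
  have hsumGx : ∑ i, (G.mulVec x) i = 0 := by
    simp only [Matrix.mulVec, dotProduct]
    rw [Finset.sum_comm]
    calc ∑ j, ∑ i, G i j * x j = ∑ j, dd * x j := by
          refine Finset.sum_congr rfl fun j _ => ?_
          rw [← Finset.sum_mul, hcol j]
      _ = dd * ∑ j, x j := by rw [Finset.mul_sum]
      _ = 0 := by rw [hx0, mul_zero]
  have hcross : ∑ i, (G.mulVec x) i * (G.mulVec e) i = 0 := by
    rw [hGe]
    simp only [← Finset.sum_mul]
    rw [hsumGx, zero_mul]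
  have hxe : ∑ j, x j * e j = 0 := by
    simp [he, ← Finset.sum_mul, hx0]
  -- ‖Gx‖² ≤ dd²
  have hGx_le : ∑ i, (G.mulVec x) i ^ 2 ≤ dd ^ 2 := by
    have : vecNorm x ≤ 1 := vecNorm_le_of_sq_le one_pos.le (by simpa using hx1.le)
    have h2 := vecNorm_mulVec_le_specNorm G this
    rw [hspec] at h2
    exact sq_le_of_vecNorm_le h2
  refine le_ciInf fun v => ?_
  set a : ℝ := ∑ j, v j * e j with ha
  set b : ℝ := ∑ j, v j * x j with hb
  by_cases hab : a ^ 2 + b ^ 2 = 0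
  · have ha0 : a = 0 := by nlinarith [sq_nonneg a, sq_nonneg b]
    have hb0 : b = 0 := by nlinarith [sq_nonneg a, sq_nonneg b]
    refine le_csSup (sigmaSet_bddAbove G v) ⟨x, ?_, hb0 ▸ hb.symm, rfl⟩
    exact vecNorm_le_of_sq_le one_pos.le (by simpa using hx1.le)
  · have habpos : 0 < a ^ 2 + b ^ 2 := lt_of_le_of_ne (by positivity) (Ne.symm hab)
    set t : ℝ := a ^ 2 + b ^ 2 with ht
    set y : Fin n → ℝ := a • x - b • e with hy
    have hyapp : ∀ j, y j = a * x j - b * e j := fun j => rfl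
    -- ⟨v, y⟩ = 0
    have hvy : ∑ j, v j * y j = 0 := by
      have h1 : ∀ j, v j * y j = a * (v j * x j) - b * (v j * e j) := by
        intro j; rw [hyapp]; ring
      rw [Finset.sum_congr rfl fun j _ => h1 j, Finset.sum_sub_distrib,
        ← Finset.mul_sum, ← Finset.mul_sum, ← ha, ← hb]
      ring
    -- ‖y‖² = t
    have hy2 : ∑ j, y j ^ 2 = t := by
      have : ∀ j, y j ^ 2 = a^2 * x j ^2 - 2*a*b*(x j * e j) + b^2 * e j ^2 := by
        intro j; rw [hyapp]; ring
      rw [Finset.sum_congr rfl fun j _ => this j]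
      rw [Finset.sum_add_distrib, Finset.sum_sub_distrib,
        ← Finset.mul_sum, ← Finset.mul_sum, ← Finset.mul_sum, hx1, he2, hxe]
      simp [ht]
    set st : ℝ := Real.sqrt t with hst
    have hstpos : 0 < st := Real.sqrt_pos.2 habpos
    set y' : Fin n → ℝ := st⁻¹ • y with hy'
    have hy'2 : ∑ j, y' j ^ 2 = 1 := by
      have : ∀ j, y' j ^ 2 = st⁻¹^2 * y j ^2 := by intro j; simp [hy', mul_pow]
      rw [Finset.sum_congr rfl fun j _ => this j, ← Finset.mul_sum, hy2,
        inv_pow, hst, Real.sq_sqrt habpos.le]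
      field_simp
    have hvy' : ∑ j, v j * y' j = 0 := by
      have : ∀ j, v j * y' j = st⁻¹ * (v j * y j) := by intro j; simp [hy']; ring
      rw [Finset.sum_congr rfl fun j _ => this j, ← Finset.mul_sum, hvy, mul_zero]
    -- Gy' computations
    have hGy : G.mulVec y = a • G.mulVec x - b • G.mulVec e := by
      rw [hy, Matrix.mulVec_sub, Matrix.mulVec_smul, Matrix.mulVec_smul]
    have hGy2 : ∑ i, (G.mulVec y) i ^ 2 = a^2 * (∑ i, (G.mulVec x) i ^2) + b^2 * dd^2 := by
      rw [hGy]
      have : ∀ i, (a • G.mulVec x - b • G.mulVec e) i ^ 2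
          = a^2 * (G.mulVec x) i^2 - 2*a*b*((G.mulVec x) i * (G.mulVec e) i)
            + b^2 * (G.mulVec e) i ^2 := by
        intro i; simp only [Pi.sub_apply, Pi.smul_apply, smul_eq_mul]; ring
      rw [Finset.sum_congr rfl fun i _ => this i]
      rw [Finset.sum_add_distrib, Finset.sum_sub_distrib,
        ← Finset.mul_sum, ← Finset.mul_sum, ← Finset.mul_sum, hcross, hGe2]
      ring
    have hGy' : G.mulVec y' = st⁻¹ • G.mulVec y := by
      rw [hy', Matrix.mulVec_smul]
    have hmono : ∑ i, (G.mulVec x) i ^ 2 ≤ ∑ i, (G.mulVec y') i ^ 2 := by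
      rw [hGy']
      have : ∀ i, (st⁻¹ • G.mulVec y) i ^2 = st⁻¹^2 * (G.mulVec y) i ^2 := by
        intro i; simp [mul_pow]
      rw [Finset.sum_congr rfl fun i _ => this i, ← Finset.mul_sum, hGy2,
        inv_pow, hst, Real.sq_sqrt habpos.le]
      rw [inv_mul_eq_div, le_div_iff₀ habpos, ht]
      have hb2 : b^2 * (∑ i, (G.mulVec x) i ^ 2) ≤ b^2 * dd^2 :=
        mul_le_mul_of_nonneg_left hGx_le (sq_nonneg b)
      calc (∑ i, (G.mulVec x) i ^2) * (a^2+b^2)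
          = a^2 * (∑ i, (G.mulVec x) i ^2) + b^2 * (∑ i, (G.mulVec x) i ^2) := by ring
        _ ≤ a^2 * (∑ i, (G.mulVec x) i ^2) + b^2 * dd^2 := by linarith
    have hmem : vecNorm (G.mulVec y') ∈ {c | ∃ x : Fin n → ℝ,
        vecNorm x ≤ 1 ∧ (∑ i, v i * x i) = 0 ∧ c = vecNorm (G.mulVec x)} :=
      ⟨y', vecNorm_le_of_sq_le one_pos.le (by simpa using hy'2.le), hvy', rfl⟩
    exact le_trans (vecNorm_le_vecNorm hmono) (le_csSup (sigmaSet_bddAbove G v) hmem)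
lemma key_sigma2' {n : ℕ} (hn : 0 < n) {dd : ℝ}
    (G : Matrix (Fin n) (Fin n) ℝ)
    (hspec : specNorm G = dd)
    (hcol : ∀ j, ∑ i, G i j = dd)
    (hrow : ∀ i, ∑ j, G i j = dd)
    (x : Fin n → ℝ) (hx0 : ∑ j, x j = 0) :
    ∑ i, (G.mulVec x) i ^ 2 ≤ sigma2 G ^ 2 * ∑ j, x j ^ 2 := by
  by_cases hz : ∑ j, x j ^ 2 = 0
  · have hx : x = 0 := by
      funext j
      have := (Finset.sum_eq_zero_iff_of_nonneg
        (fun i _ => sq_nonneg (x i))).1 hz j (Finset.mem_univ j)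
      exact pow_eq_zero_iff (n := 2) (by norm_num) |>.1 this
    rw [hx]
    simp
  · have hpos : 0 < ∑ j, x j ^ 2 := lt_of_le_of_ne (sumsq_nonneg x) (Ne.symm hz)
    set c : ℝ := Real.sqrt (∑ j, x j ^ 2) with hc
    have hcpos : 0 < c := Real.sqrt_pos.2 hpos
    have hc2 : c ^ 2 = ∑ j, x j ^ 2 := Real.sq_sqrt hpos.le
    set x' : Fin n → ℝ := c⁻¹ • x with hx'
    have hx'1 : ∑ j, x' j ^ 2 = 1 := by
      have h1 : ∀ j, x' j ^ 2 = c⁻¹ ^ 2 * x j ^ 2 := fun j => by simp [hx', mul_pow]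
      rw [Finset.sum_congr rfl fun j _ => h1 j, ← Finset.mul_sum, ← hc2]
      field_simp
    have hx'0 : ∑ j, x' j = 0 := by
      have h1 : ∀ j, x' j = c⁻¹ * x j := fun j => rfl
      rw [Finset.sum_congr rfl fun j _ => h1 j, ← Finset.mul_sum, hx0, mul_zero]
    have hkey := key_sigma2 hn G hspec hcol hrow hx'1 hx'0
    have hsq : ∑ i, (G.mulVec x') i ^ 2 ≤ sigma2 G ^ 2 := sq_le_of_vecNorm_le hkey
    have hGx' : G.mulVec x' = c⁻¹ • G.mulVec x := by rw [hx', Matrix.mulVec_smul]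
    rw [hGx'] at hsq
    have h2 : ∀ i, (c⁻¹ • G.mulVec x) i ^ 2 = c⁻¹ ^ 2 * (G.mulVec x) i ^ 2 :=
      fun i => by simp [mul_pow]
    rw [Finset.sum_congr rfl fun i _ => h2 i, ← Finset.mul_sum] at hsq
    have hcc : c ^ 2 * c⁻¹ ^ 2 = 1 := by field_simp
    have h3 := mul_le_mul_of_nonneg_left hsq (le_of_lt (by positivity : (0:ℝ) < c ^ 2))
    rw [← mul_assoc, hcc, one_mul] at h3
    rw [← hc2, mul_comm (sigma2 G ^ 2) (c ^ 2)]
    exact h3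

lemma key_H {n : ℕ} (hn : 0 < n) {dd : ℝ}
    (G : Matrix (Fin n) (Fin n) ℝ)
    (hspec : specNorm G = dd)
    (hcol : ∀ j, ∑ i, G i j = dd)
    (hrow : ∀ i, ∑ j, G i j = dd)
    (w : Fin n → ℝ) :
    ∑ i, (∑ j, (G i j - dd / n) * w j) ^ 2 ≤ sigma2 G ^ 2 * ∑ j, w j ^ 2 := by
  have hn' : (0:ℝ) < n := by exact_mod_cast hn
  set s : ℝ := (∑ j, w j) / n with hs
  set w' : Fin n → ℝ := fun j => w j - s with hw'
  have hsum : ∑ j, w' j = 0 := by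
    rw [hw']
    rw [Finset.sum_sub_distrib, Finset.sum_const, Finset.card_univ, Fintype.card_fin,
      nsmul_eq_mul, hs]
    field_simp
    ring
  have heq : ∀ i, ∑ j, (G i j - dd / n) * w j = (G.mulVec w') i := by
    intro i
    simp only [Matrix.mulVec, dotProduct, hw']
    rw [Finset.sum_congr rfl (fun j _ => by ring :
      ∀ j ∈ Finset.univ, (G i j - dd / n) * w j = G i j * w j - dd / n * w j)]
    rw [Finset.sum_congr rfl (fun j _ => by ring :
      ∀ j ∈ Finset.univ, G i j * (w j - s) = G i j * w j - s * G i j)]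
    rw [Finset.sum_sub_distrib, Finset.sum_sub_distrib, ← Finset.mul_sum, ← Finset.mul_sum,
      hrow i, hs]
    field_simp
  rw [Finset.sum_congr rfl fun i _ => congrArg (· ^ 2) (heq i)]
  have h1 := key_sigma2' hn G hspec hcol hrow w' hsum
  refine le_trans h1 (mul_le_mul_of_nonneg_left ?_ (sq_nonneg _))
  have h2 : ∀ j, w' j ^ 2 = w j ^ 2 - 2 * s * w j + s ^ 2 := fun j => by rw [hw']; ring
  rw [Finset.sum_congr rfl fun j _ => h2 j, Finset.sum_add_distrib, Finset.sum_sub_distrib,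
    ← Finset.mul_sum, Finset.sum_const, Finset.card_univ, Fintype.card_fin, nsmul_eq_mul]
  have hsw : ∑ j, w j = n * s := by rw [hs]; field_simp
  rw [hsw]
  nlinarith [sq_nonneg s, hn']
lemma frob2_eq_trace {α β : Type*} [Fintype α] [Fintype β] (A : Matrix α β ℝ) :
    ∑ i, ∑ j, A i j ^ 2 = Matrix.trace (Aᵀ * A) := by
  rw [Matrix.trace]
  simp only [Matrix.diag, Matrix.mul_apply, Matrix.transpose_apply]
  rw [Finset.sum_comm]
  simp [sq]

lemma frob2_mul_orth_right {n r m : ℕ} (V : Matrix (Fin n) (Fin r) ℝ) (hV : Vᵀ * V = 1)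
    (Cm : Matrix (Fin m) (Fin r) ℝ) :
    ∑ i, ∑ j, (Cm * Vᵀ) i j ^ 2 = ∑ i, ∑ j, Cm i j ^ 2 := by
  rw [frob2_eq_trace, frob2_eq_trace]
  rw [Matrix.transpose_mul, Matrix.transpose_transpose, Matrix.mul_assoc,
    Matrix.trace_mul_comm]
  simp only [Matrix.mul_assoc]
  rw [hV, Matrix.mul_one]

lemma frob2_proj_left {n r m : ℕ} (U : Matrix (Fin n) (Fin r) ℝ) (hU : Uᵀ * U = 1)
    (D : Matrix (Fin n) (Fin m) ℝ) :
    ∑ i, ∑ j, (((1 - U * Uᵀ) * D : Matrix (Fin n) (Fin m) ℝ)) i j ^ 2 ≤ ∑ i, ∑ j, D i j ^ 2 := by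
  set P : Matrix (Fin n) (Fin n) ℝ := U * Uᵀ with hPdef
  have hP : P * P = P := by
    rw [hPdef, Matrix.mul_assoc, ← Matrix.mul_assoc Uᵀ U Uᵀ, hU, Matrix.one_mul]
  have h1P : (1 - P) * (1 - P) = 1 - P := by
    rw [Matrix.mul_sub, Matrix.mul_one, Matrix.sub_mul, Matrix.one_mul, hP]
    simp
  have htr : (1 - P)ᵀ = 1 - P := by
    rw [Matrix.transpose_sub, Matrix.transpose_one, hPdef, Matrix.transpose_mul,
      Matrix.transpose_transpose]
  have key : ((1 - P) * D)ᵀ * ((1 - P) * D) = Dᵀ * D - (Uᵀ * D)ᵀ * (Uᵀ * D) := by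
    rw [Matrix.transpose_mul, htr, Matrix.mul_assoc, ← Matrix.mul_assoc (1 - P) (1 - P) D,
      h1P]
    simp only [Matrix.sub_mul, Matrix.one_mul, Matrix.mul_sub, Matrix.transpose_mul,
      Matrix.transpose_transpose, Matrix.mul_assoc, hPdef]
  have e1 := frob2_eq_trace ((1 - P) * D)
  have e2 := frob2_eq_trace D
  have e3 := frob2_eq_trace (Uᵀ * D)
  rw [e1, key, Matrix.trace_sub, ← e2, ← e3]
  have h0 : (0:ℝ) ≤ ∑ i, ∑ j, (Uᵀ * D) i j ^ 2 :=
    Finset.sum_nonneg fun i _ => Finset.sum_nonneg fun j _ => sq_nonneg _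
  linarith

lemma sum_rot {α β γ : Type*} [Fintype α] [Fintype β] [Fintype γ] (f : α → β → γ → ℝ) :
    ∑ k : α, ∑ a : β, ∑ j : γ, f k a j = ∑ j : γ, ∑ a : β, ∑ k : α, f k a j := by
  rw [Finset.sum_comm]
  rw [show (∑ a : β, ∑ k : α, ∑ j : γ, f k a j) = ∑ a : β, ∑ j : γ, ∑ k : α, f k a j from
    Finset.sum_congr rfl fun a _ => Finset.sum_comm]
  exact Finset.sum_comm

lemma frobNorm_sq {α β : Type*} [Fintype α] [Fintype β] (A : Matrix α β ℝ) :
    frobNorm A ^ 2 = ∑ i, ∑ j, A i j ^ 2 :=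
  Real.sq_sqrt (Finset.sum_nonneg fun i _ => Finset.sum_nonneg fun j _ => sq_nonneg _)
end Stmt9Aux

/-- `‖(I − UUᵀ)(n/d)P_Ω(UXᵀ)VVᵀ‖_F² ≤ (C²μ₀²r²/d)·‖X‖_F²`. -/
theorem stmt_9 {n d r : ℕ} (hn : 0 < n) (hd : 0 < d) (hr : 0 < r) {C μ₀ : ℝ} (hC : 0 < C)
    (U V : Matrix (Fin n) (Fin r) ℝ) (hU : Uᵀ * U = 1) (hV : Vᵀ * V = 1)
    (hA1U : IncoherentRows U μ₀) (hA1V : IncoherentRows V μ₀)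
    (Ω : Finset (Fin n × Fin n)) (hreg : RegularSampling Ω d)
    (hG1 : AssumptionG1 Ω d) (hG2 : AssumptionG2 Ω d C) :
    ∀ X : Matrix (Fin n) (Fin r) ℝ,
      frobNorm ((1 - U * Uᵀ) * (((n : ℝ) / (d : ℝ)) • sampl Ω (U * Xᵀ)) * (V * Vᵀ)) ^ 2 ≤
        C ^ 2 * μ₀ ^ 2 * r ^ 2 / d * frobNorm X ^ 2 := by
  intro X
  have hn' : (0:ℝ) < n := by exact_mod_cast hn
  have hd' : (0:ℝ) < d := by exact_mod_cast hd
  obtain ⟨hspec, hGone, honeG⟩ := hG1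
  have hG2' : sigma2 (biadj Ω) ≤ C * Real.sqrt d := hG2
  set G : Matrix (Fin n) (Fin n) ℝ := biadj Ω with hG
  have hrow : ∀ i, ∑ j, G i j = (d:ℝ) := by
    intro i
    have h := congrFun hGone i
    simpa [Matrix.mulVec, dotProduct] using h
  have hcol : ∀ j, ∑ i, G i j = (d:ℝ) := by
    intro j
    have h := congrFun honeG j
    simpa [Matrix.vecMul, dotProduct] using h
  set M : Matrix (Fin n) (Fin n) ℝ := U * Xᵀ with hM
  set E : Matrix (Fin n) (Fin n) ℝ :=
    Matrix.of (fun i j => (G i j - (d:ℝ)/n) * M i j) with hE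
  have hsampl : sampl Ω M = ((d:ℝ)/n) • M + E := by
    ext i j
    simp only [sampl, Matrix.of_apply, Matrix.add_apply, Matrix.smul_apply, hE, hG, biadj,
      smul_eq_mul]
    by_cases h : (i, j) ∈ Ω <;> simp [h] <;> ring
  have hPM : (1 - U * Uᵀ) * M = 0 := by
    rw [hM, Matrix.sub_mul, Matrix.one_mul, Matrix.mul_assoc, ← Matrix.mul_assoc Uᵀ U Xᵀ,
      hU, Matrix.one_mul, sub_self]
  have hiden : (1 - U * Uᵀ) * (((n:ℝ)/(d:ℝ)) • sampl Ω M) * (V * Vᵀ)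
      = ((n:ℝ)/(d:ℝ)) • (((1 - U * Uᵀ) * E) * (V * Vᵀ)) := by
    rw [Matrix.mul_smul, Matrix.smul_mul, hsampl, Matrix.mul_add, Matrix.mul_smul, hPM,
      smul_zero, zero_add]
  -- incoherence constant is nonnegative
  have hμ : 0 ≤ μ₀ * r / n := le_trans (sumsq_nonneg (U ⟨0, hn⟩)) (hA1U ⟨0, hn⟩)
  have hσ2 : sigma2 G ^ 2 ≤ C ^ 2 * d := by
    have h1 : sigma2 G ^ 2 ≤ (C * Real.sqrt d) ^ 2 :=
      pow_le_pow_left₀ (sigma2_nonneg G) hG2' 2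
    rwa [mul_pow, Real.sq_sqrt hd'.le] at h1
  -- entries of E * V
  have hEV : ∀ i k, (E * V) i k
      = ∑ a, U i a * (∑ j, (G i j - (d:ℝ)/n) * (X j a * V j k)) := by
    intro i k
    have l0 : (E * V) i k = ∑ j, ((G i j - (d:ℝ)/n) * (∑ a, U i a * X j a)) * V j k := by
      simp only [Matrix.mul_apply, hE, Matrix.of_apply, hM, Matrix.transpose_apply]
    rw [l0]
    rw [Finset.sum_congr rfl (fun j _ => by
      rw [Finset.mul_sum, Finset.sum_mul]
      exact Finset.sum_congr rfl fun a _ => by ring :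
      ∀ j ∈ Finset.univ, ((G i j - (d:ℝ)/n) * (∑ a, U i a * X j a)) * V j k
        = ∑ a, U i a * ((G i j - (d:ℝ)/n) * (X j a * V j k)))]
    rw [Finset.sum_comm]
    exact Finset.sum_congr rfl fun a _ => by rw [Finset.mul_sum]
  -- Cauchy–Schwarz on each entry
  have hCS : ∀ i k, ((E * V) i k) ^ 2
      ≤ (μ₀ * r / n) * ∑ a, (∑ j, (G i j - (d:ℝ)/n) * (X j a * V j k)) ^ 2 := by
    intro i k
    rw [hEV i k]
    calc (∑ a, U i a * (∑ j, (G i j - (d:ℝ)/n) * (X j a * V j k))) ^ 2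
        ≤ (∑ a, U i a ^ 2) * ∑ a, (∑ j, (G i j - (d:ℝ)/n) * (X j a * V j k)) ^ 2 :=
          Finset.sum_mul_sq_le_sq_mul_sq _ _ _
      _ ≤ (μ₀ * r / n) * ∑ a, (∑ j, (G i j - (d:ℝ)/n) * (X j a * V j k)) ^ 2 :=
          mul_le_mul_of_nonneg_right (hA1U i) (sumsq_nonneg _)
  -- step 2 : Frobenius bound on E * V
  have step2 : ∑ i, ∑ k, ((E * V) i k) ^ 2
      ≤ (μ₀ * r / n) * (sigma2 G ^ 2 * ((μ₀ * r / n) * ∑ j, ∑ a, X j a ^ 2)) := by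
    calc ∑ i, ∑ k, ((E * V) i k) ^ 2
        ≤ ∑ i, ∑ k, (μ₀ * r / n) *
            ∑ a, (∑ j, (G i j - (d:ℝ)/n) * (X j a * V j k)) ^ 2 :=
          Finset.sum_le_sum fun i _ => Finset.sum_le_sum fun k _ => hCS i k
      _ = (μ₀ * r / n) * ∑ k, ∑ a, ∑ i,
            (∑ j, (G i j - (d:ℝ)/n) * (X j a * V j k)) ^ 2 := by
          simp only [← Finset.mul_sum]
          congr 1
          rw [Finset.sum_comm]
          exact Finset.sum_congr rfl fun k _ => Finset.sum_comm
      _ ≤ (μ₀ * r / n) * ∑ k, ∑ a, sigma2 G ^ 2 * ∑ j, (X j a * V j k) ^ 2 := by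
          refine mul_le_mul_of_nonneg_left
            (Finset.sum_le_sum fun k _ => Finset.sum_le_sum fun a _ => ?_) hμ
          exact key_H hn G hspec hcol hrow (fun j => X j a * V j k)
      _ = (μ₀ * r / n) * (sigma2 G ^ 2 *
            ∑ j, (∑ a, X j a ^ 2) * (∑ k, V j k ^ 2)) := by
          congr 1
          simp only [← Finset.mul_sum]
          congr 1
          simp only [mul_pow]
          rw [sum_rot]
          refine Finset.sum_congr rfl fun j _ => ?_
          rw [Finset.sum_mul]
          exact Finset.sum_congr rfl fun a _ => by rw [Finset.mul_sum]
      _ ≤ (μ₀ * r / n) * (sigma2 G ^ 2 * ((μ₀ * r / n) * ∑ j, ∑ a, X j a ^ 2)) := by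
          refine mul_le_mul_of_nonneg_left (mul_le_mul_of_nonneg_left ?_ (sq_nonneg _)) hμ
          rw [Finset.mul_sum]
          refine Finset.sum_le_sum fun j _ => ?_
          rw [mul_comm (μ₀ * r / n)]
          exact mul_le_mul_of_nonneg_left (hA1V j) (sumsq_nonneg _)
  -- assemble
  set W : Matrix (Fin n) (Fin n) ℝ := (1 - U * Uᵀ) * E * (V * Vᵀ) with hWdef
  rw [hiden, frobNorm_sq, frobNorm_sq]
  have hsmul : ∑ i, ∑ j, (((n:ℝ)/(d:ℝ)) • W) i j ^ 2
      = ((n:ℝ)/(d:ℝ)) ^ 2 * ∑ i, ∑ j, W i j ^ 2 := by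
    simp only [Matrix.smul_apply, smul_eq_mul, mul_pow, Finset.mul_sum]
  rw [hsmul]
  have step1 : ∑ i, ∑ j, W i j ^ 2 ≤ ∑ i, ∑ k, ((E * V) i k) ^ 2 := by
    have hassoc : W = ((1 - U * Uᵀ) * (E * V)) * Vᵀ := by
      rw [hWdef]; simp only [Matrix.mul_assoc]
    rw [hassoc, frob2_mul_orth_right V hV]
    exact frob2_proj_left U hU (E * V)
  have hW : 0 ≤ (μ₀ * r / n) * ∑ j, ∑ a, X j a ^ 2 :=
    mul_nonneg hμ (Finset.sum_nonneg fun j _ => sumsq_nonneg _)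
  calc ((n:ℝ)/(d:ℝ)) ^ 2 * ∑ i, ∑ j, W i j ^ 2
      ≤ ((n:ℝ)/(d:ℝ)) ^ 2 * ∑ i, ∑ k, ((E * V) i k) ^ 2 :=
        mul_le_mul_of_nonneg_left step1 (by positivity)
    _ ≤ ((n:ℝ)/(d:ℝ)) ^ 2 * ((μ₀ * r / n) * (sigma2 G ^ 2 *
          ((μ₀ * r / n) * ∑ j, ∑ a, X j a ^ 2))) :=
        mul_le_mul_of_nonneg_left step2 (by positivity)
    _ ≤ ((n:ℝ)/(d:ℝ)) ^ 2 * ((μ₀ * r / n) * ((C ^ 2 * d) *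
          ((μ₀ * r / n) * ∑ j, ∑ a, X j a ^ 2))) := by
        refine mul_le_mul_of_nonneg_left (mul_le_mul_of_nonneg_left ?_ hμ) (by positivity)
        exact mul_le_mul_of_nonneg_right hσ2 hW
    _ = C ^ 2 * μ₀ ^ 2 * r ^ 2 / d * ∑ j, ∑ a, X j a ^ 2 := by
        field_simp
end
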